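/- arXiv:2309.05596 — 3 statements merged into one kernel-verified Lean document; each statement's English description precedes it below -/
import Mathlib

section
/- Let q1, q2 > 0, d1, d2, p ∈ ℝ, let n ≥ 1, let A be an n×n real matrix and B ∈ ℝⁿ. Let F, H : 𝒟 → ℝ be continuously differentiable on the triangle 𝒟 = {(x,y) : 0 ≤ y ≤ x ≤ 1} and satisfy q2 ∂x F − q1 ∂y F = d2 H and q2 ∂x H + q2 ∂y H = d1 F on 𝒟, with F(x,x) = −d2/(q1+q2) and H(x,0) = (q1 p / q2) F(x,0). Let z, w : [0,1] × [0, 1/q2] → ℝ be continuously differentiable solutions of ∂t z = −q1 ∂x z + d1 w, ∂t w = q2 ∂x w + d2 z with z(0,t) = p w(0,t), and let Y = (y_1, …, y_n) : [0, 1/q2] → ℝⁿ be continuously differentiable with Ẏ(t) = A Y(t) + B w(0,t). Define, for ς ∈ [0,1], Π(ς) = e₁ᵀ e^{Aς/q2} Y(0) + (1/q2) e₁ᵀ e^{Aς/q2} ∫₀^ς e^{−Ax/q2} B ( w(x,0) − ∫₀ˣ F(x,y) z(y,0) dy − ∫₀ˣ H(x,y) w(y,0) dy ) dx, where e₁ =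 (1,0,…,0)ᵀ. If y_1(0) ≥ 0, Π(ς) ≥ 0 for all ς ∈ (0,1), and Π(1) > 0, then y_1(t) ≥ 0 for all t ∈ [0, 1/q2) and y_1(1/q2) > 0. -/
open Set MeasureTheory intervalIntegral
open scoped Interval

lemma aux_line (f fx ft : ℝ → ℝ → ℝ) (X1 X2 T1 T2 : ℝ)
    (hfx : ∀ x ∈ Icc X1 X2, ∀ t ∈ Icc T1 T2,
      HasDerivWithinAt (fun x' => f x' t) (fx x t) (Icc X1 X2) x)
    (hfxc : ContinuousOn (fun p : ℝ × ℝ => fx p.1 p.2) (Icc X1 X2 ×ˢ Icc T1 T2))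
    (c d s₀ s₁ x₀ t₀ : ℝ) (hc : 0 ≤ c) (hss : s₀ < s₁)
    (hx₀ : x₀ ∈ Icc X1 X2) (ht₀ : t₀ ∈ Icc T1 T2)
    (hft : HasDerivWithinAt (fun t' => f x₀ t') (ft x₀ t₀) (Icc T1 T2) t₀)
    (hmap : ∀ s ∈ Icc s₀ s₁, x₀ + c * (s - s₀) ∈ Icc X1 X2 ∧ t₀ + d * (s - s₀) ∈ Icc T1 T2) :
    HasDerivWithinAt (fun s => f (x₀ + c * (s - s₀)) (t₀ + d * (s - s₀)))
      (c * fx x₀ t₀ + d * ft x₀ t₀) (Icc s₀ s₁) s₀ := by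
  have hinner : HasDerivWithinAt (fun s : ℝ => t₀ + d * (s - s₀)) d (Icc s₀ s₁) s₀ := by
    simpa using ((((hasDerivAt_id s₀).sub_const s₀).const_mul d).const_add t₀).hasDerivWithinAt
  have hmapsT : MapsTo (fun s : ℝ => t₀ + d * (s - s₀)) (Icc s₀ s₁) (Icc T1 T2) :=
    fun s hs => (hmap s hs).2
  have hG2 : HasDerivWithinAt (fun s => f x₀ (t₀ + d * (s - s₀))) (d * ft x₀ t₀)
      (Icc s₀ s₁) s₀ := by
    have := HasDerivWithinAt.comp_of_eq s₀ hft hinner hmapsT (by simp)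
    simpa [Function.comp_def, mul_comm] using this
  have hG1 : HasDerivWithinAt
      (fun s => f (x₀ + c * (s - s₀)) (t₀ + d * (s - s₀)) - f x₀ (t₀ + d * (s - s₀)))
      (c * fx x₀ t₀) (Icc s₀ s₁) s₀ := by
    rw [hasDerivWithinAt_iff_isLittleO]
    simp only [sub_self, mul_zero, add_zero, sub_zero]
    rw [Asymptotics.isLittleO_iff]
    intro ε hε
    set ε' : ℝ := ε / (c + 1) with hε'def
    have hε' : 0 < ε' := div_pos hε (by linarith)
    have hcw : ContinuousWithinAt (fun p : ℝ × ℝ => fx p.1 p.2)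
        (Icc X1 X2 ×ˢ Icc T1 T2) (x₀, t₀) := hfxc _ ⟨hx₀, ht₀⟩
    rw [Metric.continuousWithinAt_iff] at hcw
    obtain ⟨δ, hδ, hδprop⟩ := hcw ε' hε'
    have hδ2 : (0:ℝ) < δ / (c + |d| + 1) := by positivity
    have hball : ∀ᶠ s in nhdsWithin s₀ (Icc s₀ s₁), dist s s₀ < δ / (c + |d| + 1) :=
      mem_nhdsWithin_of_mem_nhds (Metric.ball_mem_nhds s₀ hδ2)
    filter_upwards [hball, self_mem_nhdsWithin] with s hsd hsmem
    -- notation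
    set u : ℝ := x₀ + c * (s - s₀) with hu
    set τ : ℝ := t₀ + d * (s - s₀) with hτ
    have hs0 : s₀ ≤ s := hsmem.1
    have hxu : x₀ ≤ u := by nlinarith
    have humem : u ∈ Icc X1 X2 := (hmap s hsmem).1
    have hτmem : τ ∈ Icc T1 T2 := (hmap s hsmem).2
    have hsubIcc : Icc x₀ u ⊆ Icc X1 X2 := fun ξ hξ =>
      ⟨le_trans hx₀.1 hξ.1, le_trans hξ.2 humem.2⟩
    -- FTC in the first variable
    have hcont : ContinuousOn (fun ξ => f ξ τ) (Icc x₀ u) := fun ξ hξ =>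
      ((hfx ξ (hsubIcc hξ) τ hτmem).continuousWithinAt).mono hsubIcc
    have hderiv : ∀ ξ ∈ Ioo x₀ u, HasDerivWithinAt (fun ξ' => f ξ' τ) (fx ξ τ) (Ioi ξ) ξ := by
      intro ξ hξ
      have hξmem : ξ ∈ Icc X1 X2 := hsubIcc ⟨le_of_lt hξ.1, le_of_lt hξ.2⟩
      refine (hfx ξ hξmem τ hτmem).mono_of_mem_nhdsWithin ?_
      refine Filter.mem_of_superset (Ioc_mem_nhdsGT_of_mem ⟨le_refl ξ, lt_of_lt_of_le hξ.2 humem.2⟩) ?_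
      exact fun a ha => ⟨le_trans hξmem.1 (le_of_lt ha.1), ha.2⟩
    have hfxslice : ContinuousOn (fun ξ => fx ξ τ) (Icc x₀ u) := by
      have : ContinuousOn (fun ξ : ℝ => ((ξ, τ) : ℝ × ℝ)) (Icc x₀ u) :=
        (continuous_id.prodMk continuous_const).continuousOn
      exact hfxc.comp this (fun ξ hξ => ⟨hsubIcc hξ, hτmem⟩)
    have hint : IntervalIntegrable (fun ξ => fx ξ τ) volume x₀ u := by
      apply ContinuousOn.intervalIntegrable
      rwa [uIcc_of_le hxu]
    have hFTC : ∫ ξ in x₀..u, fx ξ τ = f u τ - f x₀ τ :=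
      integral_eq_sub_of_hasDeriv_right_of_le hxu hcont hderiv hint
    -- rewrite the quantity to estimate
    have hconst : ∫ _ξ in x₀..u, fx x₀ t₀ = (u - x₀) • fx x₀ t₀ := by simp
    have heq : f u τ - f x₀ τ - (s - s₀) • (c * fx x₀ t₀)
        = ∫ ξ in x₀..u, (fx ξ τ - fx x₀ t₀) := by
      rw [integral_sub hint intervalIntegrable_const, hFTC, hconst]
      have : u - x₀ = c * (s - s₀) := by rw [hu]; ring
      rw [this]
      simp [smul_eq_mul]; ring
    have hbound : ∀ ξ ∈ Ι x₀ u, ‖fx ξ τ - fx x₀ t₀‖ ≤ ε' := by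
      intro ξ hξ
      rw [uIoc_of_le hxu] at hξ
      have hξmem : ξ ∈ Icc X1 X2 := hsubIcc ⟨le_of_lt hξ.1, hξ.2⟩
      have hd1 : dist ξ x₀ ≤ c * (s - s₀) := by
        rw [Real.dist_eq, abs_of_nonneg (by linarith [hξ.1.le] : (0:ℝ) ≤ ξ - x₀)]
        have : ξ ≤ u := hξ.2
        rw [hu] at this; linarith
      have hd2 : dist τ t₀ ≤ |d| * (s - s₀) := by
        rw [hτ, Real.dist_eq]
        have : t₀ + d * (s - s₀) - t₀ = d * (s - s₀) := by ring
        rw [this, abs_mul, abs_of_nonneg (by linarith : (0:ℝ) ≤ s - s₀)]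
      have hss0 : s - s₀ < δ / (c + |d| + 1) := by
        rw [Real.dist_eq, abs_of_nonneg (by linarith : (0:ℝ) ≤ s - s₀)] at hsd
        exact hsd
      have hdistp : dist ((ξ, τ) : ℝ × ℝ) ((x₀, t₀) : ℝ × ℝ) < δ := by
        rw [Prod.dist_eq]
        have h1 : c * (s - s₀) < δ := by
          calc c * (s - s₀) ≤ (c + |d| + 1) * (s - s₀) := by nlinarith [abs_nonneg d]
          _ < (c + |d| + 1) * (δ / (c + |d| + 1)) := by
              apply mul_lt_mul_of_pos_left hss0; positivity
          _ = δ := by field_simp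
        have h2 : |d| * (s - s₀) < δ := by
          calc |d| * (s - s₀) ≤ (c + |d| + 1) * (s - s₀) := by nlinarith [abs_nonneg d]
          _ < (c + |d| + 1) * (δ / (c + |d| + 1)) := by
              apply mul_lt_mul_of_pos_left hss0; positivity
          _ = δ := by field_simp
        exact max_lt (lt_of_le_of_lt hd1 h1) (lt_of_le_of_lt hd2 h2)
      have := hδprop ⟨hξmem, hτmem⟩ hdistp
      rw [Real.dist_eq] at this
      exact le_of_lt this
    calc ‖f u τ - f x₀ τ - (s - s₀) • (c * fx x₀ t₀)‖
        = ‖∫ ξ in x₀..u, (fx ξ τ - fx x₀ t₀)‖ := by rw [heq]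
      _ ≤ ε' * |u - x₀| := norm_integral_le_of_norm_le_const hbound
      _ ≤ ε * ‖s - s₀‖ := by
          have h1 : |u - x₀| = c * (s - s₀) := by
            rw [hu]
            rw [show x₀ + c * (s - s₀) - x₀ = c * (s - s₀) by ring]
            exact abs_of_nonneg (by nlinarith)
          rw [h1, Real.norm_eq_abs, abs_of_nonneg (by linarith : (0:ℝ) ≤ s - s₀)]
          rw [hε'def, div_mul_eq_mul_div, div_le_iff₀ (by linarith : (0:ℝ) < c + 1)]
          nlinarith
  have hsum := hG1.add hG2
  have hfe : (fun s => (f (x₀ + c * (s - s₀)) (t₀ + d * (s - s₀))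
        - f x₀ (t₀ + d * (s - s₀))) + f x₀ (t₀ + d * (s - s₀)))
      = (fun s => f (x₀ + c * (s - s₀)) (t₀ + d * (s - s₀))) := by
    funext s; ring
  rw [← hfe]
  exact hsum
lemma aux_leibniz (φ φs : ℝ → ℝ → ℝ) (s₀ s₁ c x₀ Ymax : ℝ)
    (hs : s₀ < s₁) (hc : 0 ≤ c) (hx₀ : 0 ≤ x₀)
    (hYm : ∀ s ∈ Icc s₀ s₁, x₀ + c * (s - s₀) ≤ Ymax)
    (hcontφ : ContinuousOn (fun p : ℝ × ℝ => φ p.1 p.2) (Icc s₀ s₁ ×ˢ Icc 0 Ymax))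
    (hds : ∀ σ ∈ Icc s₀ s₁, ∀ y ∈ Icc 0 x₀,
       HasDerivWithinAt (fun s => φ s y) (φs σ y) (Icc s₀ s₁) σ)
    (hφsc : ContinuousOn (fun p : ℝ × ℝ => φs p.1 p.2) (Icc s₀ s₁ ×ˢ Icc 0 x₀)) :
    HasDerivWithinAt (fun s => ∫ y in (0:ℝ)..(x₀ + c * (s - s₀)), φ s y)
      (c * φ s₀ x₀ + ∫ y in (0:ℝ)..x₀, φs s₀ y) (Icc s₀ s₁) s₀ := by
  have hs₀mem : s₀ ∈ Icc s₀ s₁ := ⟨le_refl _, le_of_lt hs⟩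
  have hx₀Y : x₀ ≤ Ymax := by simpa using hYm s₀ hs₀mem
  have hx₀mem : x₀ ∈ Icc (0:ℝ) Ymax := ⟨hx₀, hx₀Y⟩
  -- integrability of slices of φ
  have hsliceInt : ∀ s ∈ Icc s₀ s₁, ∀ u v : ℝ, u ∈ Icc (0:ℝ) Ymax → v ∈ Icc (0:ℝ) Ymax →
      IntervalIntegrable (fun y => φ s y) volume u v := by
    intro s hsmem u v hu hv
    apply ContinuousOn.intervalIntegrable
    have hsub : uIcc u v ⊆ Icc (0:ℝ) Ymax := uIcc_subset_Icc hu hv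
    have : ContinuousOn (fun y : ℝ => ((s, y) : ℝ × ℝ)) (uIcc u v) :=
      (continuous_const.prodMk continuous_id).continuousOn
    exact hcontφ.comp this (fun y hy => ⟨hsmem, hsub hy⟩)
  have hφsInt : ∀ σ ∈ Icc s₀ s₁, IntervalIntegrable (fun y => φs σ y) volume 0 x₀ := by
    intro σ hσ
    apply ContinuousOn.intervalIntegrable
    have hsub : uIcc (0:ℝ) x₀ ⊆ Icc (0:ℝ) x₀ := by rw [uIcc_of_le hx₀]
    have : ContinuousOn (fun y : ℝ => ((σ, y) : ℝ × ℝ)) (uIcc (0:ℝ) x₀) :=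
      (continuous_const.prodMk continuous_id).continuousOn
    exact hφsc.comp this (fun y hy => ⟨hσ, hsub hy⟩)
  have hemem : ∀ s ∈ Icc s₀ s₁, x₀ + c * (s - s₀) ∈ Icc (0:ℝ) Ymax := by
    intro s hsmem
    constructor
    · have : 0 ≤ c * (s - s₀) := mul_nonneg hc (by linarith [hsmem.1])
      linarith
    · exact hYm s hsmem
  -- the two pieces
  have hPhi2 : HasDerivWithinAt (fun s => ∫ y in x₀..(x₀ + c * (s - s₀)), φ s y)
      (c * φ s₀ x₀) (Icc s₀ s₁) s₀ := by
    rw [hasDerivWithinAt_iff_isLittleO]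
    simp only [sub_self, mul_zero, add_zero, integral_same, sub_zero]
    rw [Asymptotics.isLittleO_iff]
    intro ε hε
    set ε' : ℝ := ε / (c + 1) with hε'def
    have hε' : 0 < ε' := div_pos hε (by linarith)
    have hcw : ContinuousWithinAt (fun p : ℝ × ℝ => φ p.1 p.2)
        (Icc s₀ s₁ ×ˢ Icc 0 Ymax) (s₀, x₀) := hcontφ _ ⟨hs₀mem, hx₀mem⟩
    rw [Metric.continuousWithinAt_iff] at hcw
    obtain ⟨δ, hδ, hδprop⟩ := hcw ε' hε'
    have hδ2 : (0:ℝ) < δ / (c + 1) := by positivity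
    have hball : ∀ᶠ s in nhdsWithin s₀ (Icc s₀ s₁), dist s s₀ < δ / (c + 1) :=
      mem_nhdsWithin_of_mem_nhds (Metric.ball_mem_nhds s₀ hδ2)
    filter_upwards [hball, self_mem_nhdsWithin] with s hsd hsmem
    set e : ℝ := x₀ + c * (s - s₀) with he
    have hs0 : s₀ ≤ s := hsmem.1
    have hxe : x₀ ≤ e := by nlinarith
    have hεe : e ∈ Icc (0:ℝ) Ymax := hemem s hsmem
    have hintconst : IntervalIntegrable (fun _y : ℝ => φ s₀ x₀) volume x₀ e :=
      intervalIntegrable_const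
    have hint : IntervalIntegrable (fun y => φ s y) volume x₀ e :=
      hsliceInt s hsmem x₀ e hx₀mem hεe
    have heq : (∫ y in x₀..e, φ s y) - (s - s₀) • (c * φ s₀ x₀)
        = ∫ y in x₀..e, (φ s y - φ s₀ x₀) := by
      rw [integral_sub hint hintconst, intervalIntegral.integral_const, he]
      simp only [smul_eq_mul]
      ring
    have hbound : ∀ y ∈ Ι x₀ e, ‖φ s y - φ s₀ x₀‖ ≤ ε' := by
      intro y hy
      rw [uIoc_of_le hxe] at hy
      have hymem : y ∈ Icc (0:ℝ) Ymax := ⟨le_trans hx₀ hy.1.le, le_trans hy.2 hεe.2⟩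
      have hdisty : dist y x₀ ≤ c * (s - s₀) := by
        rw [Real.dist_eq, abs_of_nonneg (by linarith [hy.1.le] : (0:ℝ) ≤ y - x₀)]
        have := hy.2; rw [he] at this; linarith
      have hss0 : s - s₀ < δ / (c + 1) := by
        rw [Real.dist_eq, abs_of_nonneg (by linarith : (0:ℝ) ≤ s - s₀)] at hsd; exact hsd
      have hdistp : dist ((s, y) : ℝ × ℝ) ((s₀, x₀) : ℝ × ℝ) < δ := by
        rw [Prod.dist_eq]
        have h2 : c * (s - s₀) < δ := by
          calc c * (s - s₀) ≤ (c + 1) * (s - s₀) := by nlinarith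
            _ < (c + 1) * (δ / (c + 1)) := by
                apply mul_lt_mul_of_pos_left hss0; linarith
            _ = δ := by field_simp
        have h1 : dist s s₀ < δ := by
          rw [Real.dist_eq, abs_of_nonneg (by linarith : (0:ℝ) ≤ s - s₀)]
          calc s - s₀ < δ / (c + 1) := hss0
            _ ≤ δ := by rw [div_le_iff₀ (by linarith : (0:ℝ) < c + 1)]; nlinarith
        exact max_lt h1 (lt_of_le_of_lt hdisty h2)
      have := hδprop ⟨hsmem, hymem⟩ hdistp
      rw [Real.dist_eq] at this
      exact le_of_lt this
    calc ‖(∫ y in x₀..e, φ s y) - (s - s₀) • (c * φ s₀ x₀)‖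
        = ‖∫ y in x₀..e, (φ s y - φ s₀ x₀)‖ := by rw [heq]
      _ ≤ ε' * |e - x₀| := norm_integral_le_of_norm_le_const hbound
      _ ≤ ε * ‖s - s₀‖ := by
          rw [show e - x₀ = c * (s - s₀) by rw [he]; ring,
            abs_of_nonneg (by nlinarith : (0:ℝ) ≤ c * (s - s₀)),
            Real.norm_eq_abs, abs_of_nonneg (by linarith : (0:ℝ) ≤ s - s₀),
            hε'def, div_mul_eq_mul_div, div_le_iff₀ (by linarith : (0:ℝ) < c + 1)]
          nlinarith
  have hPhi1 : HasDerivWithinAt (fun s => ∫ y in (0:ℝ)..x₀, φ s y)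
      (∫ y in (0:ℝ)..x₀, φs s₀ y) (Icc s₀ s₁) s₀ := by
    rw [hasDerivWithinAt_iff_isLittleO, Asymptotics.isLittleO_iff]
    intro ε hε
    set ε' : ℝ := ε / (x₀ + 1) with hε'def
    have hε' : 0 < ε' := div_pos hε (by linarith)
    have hK : IsCompact (Icc s₀ s₁ ×ˢ Icc (0:ℝ) x₀) := isCompact_Icc.prod isCompact_Icc
    have hUC := hK.uniformContinuousOn_of_continuous hφsc
    rw [Metric.uniformContinuousOn_iff] at hUC
    obtain ⟨δ, hδ, hδprop⟩ := hUC ε' hε'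
    have hball : ∀ᶠ s in nhdsWithin s₀ (Icc s₀ s₁), dist s s₀ < δ :=
      mem_nhdsWithin_of_mem_nhds (Metric.ball_mem_nhds s₀ hδ)
    filter_upwards [hball, self_mem_nhdsWithin] with s hsd hsmem
    have hs0 : s₀ ≤ s := hsmem.1
    have h0mem : (0:ℝ) ∈ Icc (0:ℝ) Ymax := ⟨le_refl _, le_trans hx₀ hx₀Y⟩
    have hintS : IntervalIntegrable (fun y => φ s y) volume 0 x₀ :=
      hsliceInt s hsmem 0 x₀ h0mem hx₀mem
    have hintS0 : IntervalIntegrable (fun y => φ s₀ y) volume 0 x₀ :=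
      hsliceInt s₀ hs₀mem 0 x₀ h0mem hx₀mem
    have hintD : IntervalIntegrable (fun y => φs s₀ y) volume 0 x₀ := hφsInt s₀ hs₀mem
    have heq : (∫ y in (0:ℝ)..x₀, φ s y) - (∫ y in (0:ℝ)..x₀, φ s₀ y)
        - (s - s₀) • (∫ y in (0:ℝ)..x₀, φs s₀ y)
        = ∫ y in (0:ℝ)..x₀, (φ s y - φ s₀ y - (s - s₀) * φs s₀ y) := by
      rw [integral_sub (hintS.sub hintS0) (hintD.const_mul (s - s₀)),
        integral_sub hintS hintS0, intervalIntegral.integral_const_mul]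
      simp only [smul_eq_mul]
    have hbound : ∀ y ∈ Ι (0:ℝ) x₀,
        ‖φ s y - φ s₀ y - (s - s₀) * φs s₀ y‖ ≤ ε' * (s - s₀) := by
      intro y hy
      rw [uIoc_of_le hx₀] at hy
      have hymem : y ∈ Icc (0:ℝ) x₀ := ⟨hy.1.le, hy.2⟩
      -- FTC in σ
      have hsubs : Icc s₀ s ⊆ Icc s₀ s₁ := Icc_subset_Icc (le_refl _) hsmem.2
      have hcontσ : ContinuousOn (fun σ => φ σ y) (Icc s₀ s) := fun σ hσ =>
        ((hds σ (hsubs hσ) y hymem).continuousWithinAt).mono hsubs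
      have hderivσ : ∀ σ ∈ Ioo s₀ s, HasDerivWithinAt (fun σ' => φ σ' y) (φs σ y) (Ioi σ) σ := by
        intro σ hσ
        have hσmem : σ ∈ Icc s₀ s₁ := hsubs ⟨hσ.1.le, hσ.2.le⟩
        refine (hds σ hσmem y hymem).mono_of_mem_nhdsWithin ?_
        refine Filter.mem_of_superset
          (Ioc_mem_nhdsGT_of_mem ⟨le_refl σ, lt_of_lt_of_le hσ.2 hsmem.2⟩) ?_
        exact fun a ha => ⟨le_trans hσmem.1 ha.1.le, ha.2⟩
      have hintσ : IntervalIntegrable (fun σ => φs σ y) volume s₀ s := by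
        apply ContinuousOn.intervalIntegrable
        have hsub2 : uIcc s₀ s ⊆ Icc s₀ s₁ := by rw [uIcc_of_le hs0]; exact hsubs
        have : ContinuousOn (fun σ : ℝ => ((σ, y) : ℝ × ℝ)) (uIcc s₀ s) :=
          (continuous_id.prodMk continuous_const).continuousOn
        exact hφsc.comp this (fun σ hσ => ⟨hsub2 hσ, hymem⟩)
      have hFTC : ∫ σ in s₀..s, φs σ y = φ s y - φ s₀ y :=
        integral_eq_sub_of_hasDeriv_right_of_le hs0 hcontσ hderivσ hintσ
      have heq2 : φ s y - φ s₀ y - (s - s₀) * φs s₀ y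
          = ∫ σ in s₀..s, (φs σ y - φs s₀ y) := by
        rw [integral_sub hintσ intervalIntegrable_const, hFTC]
        simp [smul_eq_mul]
      rw [heq2]
      have hbd : ∀ σ ∈ Ι s₀ s, ‖φs σ y - φs s₀ y‖ ≤ ε' := by
        intro σ hσ
        rw [uIoc_of_le hs0] at hσ
        have hσmem : σ ∈ Icc s₀ s₁ := hsubs ⟨hσ.1.le, hσ.2⟩
        have hdd : dist ((σ, y) : ℝ × ℝ) ((s₀, y) : ℝ × ℝ) < δ := by
          rw [Prod.dist_eq]
          simp only [dist_self]
          have : dist σ s₀ < δ := by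
            rw [Real.dist_eq, abs_of_nonneg (by linarith [hσ.1.le] : (0:ℝ) ≤ σ - s₀)]
            rw [Real.dist_eq, abs_of_nonneg (by linarith : (0:ℝ) ≤ s - s₀)] at hsd
            linarith [hσ.2]
          exact max_lt this hδ
        have := hδprop (σ, y) ⟨hσmem, hymem⟩ (s₀, y) ⟨hs₀mem, hymem⟩ hdd
        rw [Real.dist_eq] at this
        exact le_of_lt this
      calc ‖∫ σ in s₀..s, (φs σ y - φs s₀ y)‖ ≤ ε' * |s - s₀| :=
            norm_integral_le_of_norm_le_const hbd
        _ = ε' * (s - s₀) := by rw [abs_of_nonneg (by linarith : (0:ℝ) ≤ s - s₀)]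
    rw [heq]
    calc ‖∫ y in (0:ℝ)..x₀, (φ s y - φ s₀ y - (s - s₀) * φs s₀ y)‖
        ≤ ε' * (s - s₀) * |x₀ - 0| := norm_integral_le_of_norm_le_const hbound
      _ ≤ ε * ‖s - s₀‖ := by
          rw [sub_zero, abs_of_nonneg hx₀, Real.norm_eq_abs,
            abs_of_nonneg (by linarith : (0:ℝ) ≤ s - s₀),
            hε'def]
          rw [div_mul_eq_mul_div, div_mul_eq_mul_div, div_le_iff₀ (by linarith : (0:ℝ) < x₀ + 1)]
          nlinarith
  -- combine
  have hsum := hPhi1.add hPhi2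
  have hcongr : ∀ s ∈ Icc s₀ s₁,
      (∫ y in (0:ℝ)..(x₀ + c * (s - s₀)), φ s y)
      = (∫ y in (0:ℝ)..x₀, φ s y) + ∫ y in x₀..(x₀ + c * (s - s₀)), φ s y := by
    intro s hsmem
    rw [integral_add_adjacent_intervals
      (hsliceInt s hsmem 0 x₀ ⟨le_refl _, le_trans hx₀ hx₀Y⟩ hx₀mem)
      (hsliceInt s hsmem x₀ _ hx₀mem (hemem s hsmem))]
  have := hsum.congr hcongr (hcongr s₀ hs₀mem)
  rw [add_comm (c * φ s₀ x₀)]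
  exact this
lemma aux_cont_param (φ : ℝ → ℝ → ℝ) (a b Ymax : ℝ) (e : ℝ → ℝ) (hab : a ≤ b)
    (hcontφ : ContinuousOn (fun p : ℝ × ℝ => φ p.1 p.2) (Icc a b ×ˢ Icc 0 Ymax))
    (he : ContinuousOn e (Icc a b))
    (hemem : ∀ s ∈ Icc a b, e s ∈ Icc 0 Ymax) :
    ContinuousOn (fun s => ∫ y in (0:ℝ)..e s, φ s y) (Icc a b) := by
  have hY0 : (0:ℝ) ≤ Ymax := by
    have := hemem a ⟨le_refl _, hab⟩; exact le_trans this.1 this.2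
  have hK : IsCompact (Icc a b ×ˢ Icc (0:ℝ) Ymax) := isCompact_Icc.prod isCompact_Icc
  obtain ⟨M, hM⟩ := hK.exists_bound_of_continuousOn hcontφ
  have hM0 : (0:ℝ) ≤ M :=
    le_trans (norm_nonneg (φ a 0)) (hM ((a, 0) : ℝ × ℝ) ⟨⟨le_refl _, hab⟩, ⟨le_refl _, hY0⟩⟩)
  have hUC := hK.uniformContinuousOn_of_continuous hcontφ
  rw [Metric.uniformContinuousOn_iff] at hUC
  have hsliceInt : ∀ s ∈ Icc a b, ∀ u v : ℝ, u ∈ Icc (0:ℝ) Ymax → v ∈ Icc (0:ℝ) Ymax →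
      IntervalIntegrable (fun y => φ s y) volume u v := by
    intro s hsmem u v hu hv
    apply ContinuousOn.intervalIntegrable
    have hsub : uIcc u v ⊆ Icc (0:ℝ) Ymax := uIcc_subset_Icc hu hv
    exact hcontφ.comp ((continuous_const.prodMk continuous_id).continuousOn)
      (fun y hy => ⟨hsmem, hsub hy⟩)
  intro s₀ hs₀
  rw [Metric.continuousWithinAt_iff]
  intro ε hε
  set ε₁ : ℝ := ε / (2 * (Ymax + 1)) with hε₁def
  have hε₁ : 0 < ε₁ := by positivity
  obtain ⟨δ₁, hδ₁, hδ₁prop⟩ := hUC ε₁ hε₁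
  have hecw := he s₀ hs₀
  rw [Metric.continuousWithinAt_iff] at hecw
  obtain ⟨δ₂, hδ₂, hδ₂prop⟩ := hecw (ε / (2 * (M + 1))) (by positivity)
  refine ⟨min δ₁ δ₂, lt_min hδ₁ hδ₂, ?_⟩
  intro s hsmem hsd
  have hsd1 : dist s s₀ < δ₁ := lt_of_lt_of_le hsd (min_le_left _ _)
  have hsd2 : dist s s₀ < δ₂ := lt_of_lt_of_le hsd (min_le_right _ _)
  have hes := hemem s hsmem
  have hes₀ := hemem s₀ hs₀
  have h0mem : (0:ℝ) ∈ Icc (0:ℝ) Ymax := ⟨le_refl _, hY0⟩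
  have hsplit : (∫ y in (0:ℝ)..e s, φ s y)
      = (∫ y in (0:ℝ)..e s₀, φ s y) + ∫ y in (e s₀)..(e s), φ s y := by
    rw [integral_add_adjacent_intervals (hsliceInt s hsmem 0 _ h0mem hes₀)
      (hsliceInt s hsmem _ _ hes₀ hes)]
  have hbd1 : ‖∫ y in (e s₀)..(e s), φ s y‖ ≤ M * |e s - e s₀| := by
    apply intervalIntegral.norm_integral_le_of_norm_le_const
    intro y hy
    have hymem : y ∈ Icc (0:ℝ) Ymax :=
      uIcc_subset_Icc hes₀ hes (uIoc_subset_uIcc hy)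
    exact hM (s, y) ⟨hsmem, hymem⟩
  have hbd2 : ‖(∫ y in (0:ℝ)..e s₀, φ s y) - ∫ y in (0:ℝ)..e s₀, φ s₀ y‖
      ≤ ε₁ * |e s₀ - 0| := by
    rw [← integral_sub (hsliceInt s hsmem 0 _ h0mem hes₀)
      (hsliceInt s₀ hs₀ 0 _ h0mem hes₀)]
    apply intervalIntegral.norm_integral_le_of_norm_le_const
    intro y hy
    have hymem : y ∈ Icc (0:ℝ) Ymax :=
      uIcc_subset_Icc ⟨le_refl _, hY0⟩ hes₀ (uIoc_subset_uIcc hy)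
    have := hδ₁prop (s, y) ⟨hsmem, hymem⟩ (s₀, y) ⟨hs₀, hymem⟩ (by
      rw [Prod.dist_eq]; simp only [dist_self]
      exact max_lt hsd1 hδ₁)
    rw [Real.dist_eq] at this
    exact le_of_lt this
  rw [Real.dist_eq]
  have : (∫ y in (0:ℝ)..e s, φ s y) - (∫ y in (0:ℝ)..e s₀, φ s₀ y)
      = ((∫ y in (0:ℝ)..e s₀, φ s y) - ∫ y in (0:ℝ)..e s₀, φ s₀ y)
        + ∫ y in (e s₀)..(e s), φ s y := by rw [hsplit]; ring
  rw [this]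
  calc |((∫ y in (0:ℝ)..e s₀, φ s y) - ∫ y in (0:ℝ)..e s₀, φ s₀ y)
        + ∫ y in (e s₀)..(e s), φ s y|
      ≤ |(∫ y in (0:ℝ)..e s₀, φ s y) - ∫ y in (0:ℝ)..e s₀, φ s₀ y|
        + |∫ y in (e s₀)..(e s), φ s y| := abs_add_le _ _
    _ ≤ ε₁ * |e s₀ - 0| + M * |e s - e s₀| := add_le_add hbd2 hbd1
    _ < ε := by
        have h1 : ε₁ * |e s₀ - 0| ≤ ε / 2 := by
          rw [sub_zero, abs_of_nonneg hes₀.1, hε₁def]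
          rw [div_mul_eq_mul_div, div_le_div_iff₀ (by positivity) (by norm_num)]
          nlinarith [hes₀.2]
        have h2 : M * |e s - e s₀| < ε / 2 := by
          have := hδ₂prop hsmem hsd2
          rw [Real.dist_eq] at this
          calc M * |e s - e s₀| ≤ (M + 1) * |e s - e s₀| := by nlinarith [abs_nonneg (e s - e s₀)]
            _ < (M + 1) * (ε / (2 * (M + 1))) := by
                apply mul_lt_mul_of_pos_left this; linarith
            _ = ε / 2 := by field_simp
        linarith
/-- Lemma 1 of the paper.  Before the control can reach the
distal ODE (i.e. on `[0, 1/q2]`), the output `y_1` of `Ẏ = AY + B w(0,t)`,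
driven by the coupled hyperbolic system, stays nonnegative under the
initial-data conditions expressed through `Π`. -/
theorem output_nonneg_before_control
    (q1 q2 : ℝ) (hq1 : 0 < q1) (hq2 : 0 < q2) (d1 d2 p : ℝ)
    (n : ℕ) (hn : 0 < n)
    (A : Matrix (Fin n) (Fin n) ℝ) (B : Fin n → ℝ)
    (F H Fx Fy Hx Hy : ℝ → ℝ → ℝ)
    -- F, H continuously differentiable on the triangle 𝒟, solving the kernel equations:
    (hFc : ContinuousOn (fun q : ℝ × ℝ => F q.1 q.2)
      {q : ℝ × ℝ | 0 ≤ q.2 ∧ q.2 ≤ q.1 ∧ q.1 ≤ 1})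
    (hHc : ContinuousOn (fun q : ℝ × ℝ => H q.1 q.2)
      {q : ℝ × ℝ | 0 ≤ q.2 ∧ q.2 ≤ q.1 ∧ q.1 ≤ 1})
    (hFx : ∀ x y, 0 ≤ y → y ≤ x → x ≤ 1 →
      HasDerivWithinAt (fun x' => F x' y) (Fx x y) (Icc y 1) x)
    (hFy : ∀ x y, 0 ≤ y → y ≤ x → x ≤ 1 →
      HasDerivWithinAt (fun y' => F x y') (Fy x y) (Icc 0 x) y)
    (hHx : ∀ x y, 0 ≤ y → y ≤ x → x ≤ 1 →
      HasDerivWithinAt (fun x' => H x' y) (Hx x y) (Icc y 1) x)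
    (hHy : ∀ x y, 0 ≤ y → y ≤ x → x ≤ 1 →
      HasDerivWithinAt (fun y' => H x y') (Hy x y) (Icc 0 x) y)
    (hFxc : ContinuousOn (fun q : ℝ × ℝ => Fx q.1 q.2)
      {q : ℝ × ℝ | 0 ≤ q.2 ∧ q.2 ≤ q.1 ∧ q.1 ≤ 1})
    (hFyc : ContinuousOn (fun q : ℝ × ℝ => Fy q.1 q.2)
      {q : ℝ × ℝ | 0 ≤ q.2 ∧ q.2 ≤ q.1 ∧ q.1 ≤ 1})
    (hHxc : ContinuousOn (fun q : ℝ × ℝ => Hx q.1 q.2)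
      {q : ℝ × ℝ | 0 ≤ q.2 ∧ q.2 ≤ q.1 ∧ q.1 ≤ 1})
    (hHyc : ContinuousOn (fun q : ℝ × ℝ => Hy q.1 q.2)
      {q : ℝ × ℝ | 0 ≤ q.2 ∧ q.2 ≤ q.1 ∧ q.1 ≤ 1})
    (hFpde : ∀ x y, 0 ≤ y → y ≤ x → x ≤ 1 →
      q2 * Fx x y - q1 * Fy x y = d2 * H x y)
    (hHpde : ∀ x y, 0 ≤ y → y ≤ x → x ≤ 1 →
      q2 * Hx x y + q2 * Hy x y = d1 * F x y)
    (hFbc : ∀ x ∈ Icc (0:ℝ) 1, F x x = -d2 / (q1 + q2))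
    (hHbc : ∀ x ∈ Icc (0:ℝ) 1, H x 0 = (q1 * p / q2) * F x 0)
    -- z, w continuously differentiable solutions on [0,1] × [0, 1/q2]:
    (z w zx zt wx wt : ℝ → ℝ → ℝ)
    (hzc : ContinuousOn (fun q : ℝ × ℝ => z q.1 q.2) (Icc 0 1 ×ˢ Icc 0 (1/q2)))
    (hwc : ContinuousOn (fun q : ℝ × ℝ => w q.1 q.2) (Icc 0 1 ×ˢ Icc 0 (1/q2)))
    (hzx : ∀ x ∈ Icc (0:ℝ) 1, ∀ t ∈ Icc (0:ℝ) (1/q2),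
      HasDerivWithinAt (fun x' => z x' t) (zx x t) (Icc 0 1) x)
    (hzt : ∀ x ∈ Icc (0:ℝ) 1, ∀ t ∈ Icc (0:ℝ) (1/q2),
      HasDerivWithinAt (fun t' => z x t') (zt x t) (Icc 0 (1/q2)) t)
    (hwx : ∀ x ∈ Icc (0:ℝ) 1, ∀ t ∈ Icc (0:ℝ) (1/q2),
      HasDerivWithinAt (fun x' => w x' t) (wx x t) (Icc 0 1) x)
    (hwt : ∀ x ∈ Icc (0:ℝ) 1, ∀ t ∈ Icc (0:ℝ) (1/q2),
      HasDerivWithinAt (fun t' => w x t') (wt x t) (Icc 0 (1/q2)) t)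
    (hzxc : ContinuousOn (fun q : ℝ × ℝ => zx q.1 q.2) (Icc 0 1 ×ˢ Icc 0 (1/q2)))
    (hztc : ContinuousOn (fun q : ℝ × ℝ => zt q.1 q.2) (Icc 0 1 ×ˢ Icc 0 (1/q2)))
    (hwxc : ContinuousOn (fun q : ℝ × ℝ => wx q.1 q.2) (Icc 0 1 ×ˢ Icc 0 (1/q2)))
    (hwtc : ContinuousOn (fun q : ℝ × ℝ => wt q.1 q.2) (Icc 0 1 ×ˢ Icc 0 (1/q2)))
    (hzpde : ∀ x ∈ Icc (0:ℝ) 1, ∀ t ∈ Icc (0:ℝ) (1/q2),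
      zt x t = -q1 * zx x t + d1 * w x t)
    (hwpde : ∀ x ∈ Icc (0:ℝ) 1, ∀ t ∈ Icc (0:ℝ) (1/q2),
      wt x t = q2 * wx x t + d2 * z x t)
    (hzwbc : ∀ t ∈ Icc (0:ℝ) (1/q2), z 0 t = p * w 0 t)
    -- the distal ODE Ẏ = AY + B w(0,t):
    (Y : ℝ → Fin n → ℝ)
    (hY : ∀ t ∈ Icc (0:ℝ) (1/q2),
      HasDerivAt Y (A.mulVec (Y t) + w 0 t • B) t)
    -- the function Π built from the initial data:
    (Pifun : ℝ → ℝ)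
    (hPi : ∀ ς : ℝ, Pifun ς =
      ((NormedSpace.exp ((ς / q2) • A)).mulVec (Y 0)) ⟨0, hn⟩
        + (1 / q2) * ((NormedSpace.exp ((ς / q2) • A)).mulVec
            (∫ x in (0:ℝ)..ς,
              (w x 0 - (∫ y in (0:ℝ)..x, F x y * z y 0)
                  - ∫ y in (0:ℝ)..x, H x y * w y 0)
                • (NormedSpace.exp ((-(x / q2)) • A)).mulVec B)) ⟨0, hn⟩)
    -- the initial-data conditions of Assumption 3:
    (hY0 : 0 ≤ Y 0 ⟨0, hn⟩)
    (hPi0 : ∀ ς ∈ Ioo (0:ℝ) 1, 0 ≤ Pifun ς)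
    (hPi1 : 0 < Pifun 1) :
    (∀ t ∈ Ico (0:ℝ) (1/q2), 0 ≤ Y t ⟨0, hn⟩) ∧ 0 < Y (1/q2) ⟨0, hn⟩ := by
  have hq2' : q2 ≠ 0 := ne_of_gt hq2
  have hT0 : (0:ℝ) < 1/q2 := by positivity
  -- Part 1: transport along characteristics (to be proven)
  have charac : ∀ t ∈ Icc (0:ℝ) (1/q2),
      w 0 t = w (q2*t) 0 - (∫ y in (0:ℝ)..(q2*t), F (q2*t) y * z y 0)
        - ∫ y in (0:ℝ)..(q2*t), H (q2*t) y * w y 0 := by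
    intro t ht
    rcases eq_or_lt_of_le ht.1 with h0 | h0
    · rw [← h0]
      norm_num
    -- now 0 < t
    have hq2t1 : q2 * t ≤ 1 := by
      have := mul_le_mul_of_nonneg_left ht.2 (le_of_lt hq2)
      rwa [mul_one_div_cancel (ne_of_gt hq2)] at this
    -- continuous extensions of the kernels to the square
    set Fe : ℝ → ℝ → ℝ := fun x y => F (max x y) (min x y) with hFedef
    set He : ℝ → ℝ → ℝ := fun x y => H (max x y) (min x y) with hHedef
    have hFeEq : ∀ x y : ℝ, y ≤ x → Fe x y = F x y := by
      intro x y h; rw [hFedef]; simp only [max_eq_left h, min_eq_right h]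
    have hHeEq : ∀ x y : ℝ, y ≤ x → He x y = H x y := by
      intro x y h; rw [hHedef]; simp only [max_eq_left h, min_eq_right h]
    have hsqmap : ContinuousOn (fun p : ℝ × ℝ => ((max p.1 p.2, min p.1 p.2) : ℝ × ℝ))
        (Icc 0 1 ×ˢ Icc (0:ℝ) 1) :=
      ((continuous_fst.max continuous_snd).prodMk (continuous_fst.min continuous_snd)).continuousOn
    have hsqmapsTo : ∀ p : ℝ × ℝ, p ∈ Icc 0 1 ×ˢ Icc (0:ℝ) 1 →
        ((max p.1 p.2, min p.1 p.2) : ℝ × ℝ) ∈ {q : ℝ × ℝ | 0 ≤ q.2 ∧ q.2 ≤ q.1 ∧ q.1 ≤ 1} := by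
      intro p hp
      exact ⟨le_min hp.1.1 hp.2.1, min_le_max, max_le hp.1.2 hp.2.2⟩
    have hFeC : ContinuousOn (fun p : ℝ × ℝ => Fe p.1 p.2) (Icc 0 1 ×ˢ Icc (0:ℝ) 1) :=
      hFc.comp hsqmap hsqmapsTo
    have hHeC : ContinuousOn (fun p : ℝ × ℝ => He p.1 p.2) (Icc 0 1 ×ˢ Icc (0:ℝ) 1) :=
      hHc.comp hsqmap hsqmapsTo
    -- the function transported along the characteristic
    set g : ℝ → ℝ := fun s => w (q2*s) (t-s)
      - (∫ y in (0:ℝ)..(q2*s), Fe (q2*s) y * z y (t-s))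
      - ∫ y in (0:ℝ)..(q2*s), He (q2*s) y * w y (t-s) with hgdef
    have hmapx : ∀ s ∈ Icc (0:ℝ) t, q2 * s ∈ Icc (0:ℝ) 1 := by
      intro s hs
      exact ⟨mul_nonneg (le_of_lt hq2) hs.1,
        le_trans (mul_le_mul_of_nonneg_left hs.2 (le_of_lt hq2)) hq2t1⟩
    have hmapt : ∀ s ∈ Icc (0:ℝ) t, t - s ∈ Icc (0:ℝ) (1/q2) := by
      intro s hs
      exact ⟨by linarith [hs.2], by linarith [hs.1, ht.2]⟩
    -- continuity of g on [0, t]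
    have hwline : ContinuousOn (fun s => w (q2*s) (t-s)) (Icc 0 t) := by
      apply hwc.comp ((continuous_const.mul continuous_id).prodMk
        (continuous_const.sub continuous_id)).continuousOn
      intro s hs
      exact ⟨hmapx s hs, hmapt s hs⟩
    have hφFc : ContinuousOn (fun p : ℝ × ℝ => Fe (q2*p.1) p.2 * z p.2 (t-p.1))
        (Icc 0 t ×ˢ Icc (0:ℝ) 1) := by
      apply ContinuousOn.mul
      · apply hFeC.comp ((continuous_const.mul continuous_fst).prodMk
          continuous_snd).continuousOn
        intro p hp
        exact ⟨hmapx p.1 hp.1, hp.2⟩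
      · apply hzc.comp (continuous_snd.prodMk
          (continuous_const.sub continuous_fst)).continuousOn
        intro p hp
        exact ⟨hp.2, hmapt p.1 hp.1⟩
    have hφHc : ContinuousOn (fun p : ℝ × ℝ => He (q2*p.1) p.2 * w p.2 (t-p.1))
        (Icc 0 t ×ˢ Icc (0:ℝ) 1) := by
      apply ContinuousOn.mul
      · apply hHeC.comp ((continuous_const.mul continuous_fst).prodMk
          continuous_snd).continuousOn
        intro p hp
        exact ⟨hmapx p.1 hp.1, hp.2⟩
      · apply hwc.comp (continuous_snd.prodMk
          (continuous_const.sub continuous_fst)).continuousOn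
        intro p hp
        exact ⟨hp.2, hmapt p.1 hp.1⟩
    have hgc : ContinuousOn g (Icc 0 t) := by
      have hIF := aux_cont_param (fun s y => Fe (q2*s) y * z y (t-s)) 0 t 1
          (fun s => q2*s) (le_of_lt h0) hφFc
          (continuous_const.mul continuous_id).continuousOn hmapx
      have hIH := aux_cont_param (fun s y => He (q2*s) y * w y (t-s)) 0 t 1
          (fun s => q2*s) (le_of_lt h0) hφHc
          (continuous_const.mul continuous_id).continuousOn hmapx
      exact (hwline.sub hIF).sub hIH
    -- derivative of g
    have hgd : ∀ s₀ ∈ Ico (0:ℝ) t, HasDerivWithinAt g 0 (Ici s₀) s₀ := by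
      intro s₀ hs₀
      have hs₀0 : (0:ℝ) ≤ s₀ := hs₀.1
      have hs₀t : s₀ < t := hs₀.2
      have hx₀mem : q2 * s₀ ∈ Icc (0:ℝ) 1 := hmapx s₀ ⟨hs₀0, le_of_lt hs₀t⟩
      have hτ₀mem : t - s₀ ∈ Icc (0:ℝ) (1/q2) := hmapt s₀ ⟨hs₀0, le_of_lt hs₀t⟩
      have hx₀0 : (0:ℝ) ≤ q2 * s₀ := hx₀mem.1
      have hx₀1 : q2 * s₀ ≤ 1 := hx₀mem.2
      have hsub01 : Icc (0:ℝ) (q2*s₀) ⊆ Icc (0:ℝ) 1 := Icc_subset_Icc (le_refl _) hx₀1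
      -- piece 1 : the w-term
      have P1 : HasDerivWithinAt (fun s => w (q2*s) (t-s))
          (q2 * wx (q2*s₀) (t-s₀) + (-1) * wt (q2*s₀) (t-s₀)) (Icc s₀ t) s₀ := by
        have := aux_line w wx wt 0 1 0 (1/q2) hwx hwxc q2 (-1) s₀ t (q2*s₀) (t-s₀)
          (le_of_lt hq2) hs₀t hx₀mem hτ₀mem
          (hwt (q2*s₀) hx₀mem (t-s₀) hτ₀mem)
          (by
            intro s hs
            constructor
            · have : q2*s₀ + q2 * (s - s₀) = q2 * s := by ring
              rw [this]
              exact hmapx s ⟨le_trans hs₀0 hs.1, hs.2⟩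
            · have : (t-s₀) + (-1) * (s - s₀) = t - s := by ring
              rw [this]
              exact hmapt s ⟨le_trans hs₀0 hs.1, hs.2⟩)
        have hfun : (fun s => w (q2*s₀ + q2 * (s - s₀)) ((t-s₀) + (-1) * (s - s₀)))
            = fun s => w (q2*s) (t-s) := by
          funext s; congr 1 <;> ring
        rwa [hfun] at this
      -- piece 2 : the F-integral
      have P2 : HasDerivWithinAt
          (fun s => ∫ y in (0:ℝ)..(q2*s), Fe (q2*s) y * z y (t-s))
          (q2 * (Fe (q2*s₀) (q2*s₀) * z (q2*s₀) (t-s₀))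
            + ∫ y in (0:ℝ)..(q2*s₀), (Fx (q2*s₀) y * q2 * z y (t-s₀)
              + Fe (q2*s₀) y * (zt y (t-s₀) * (-1)))) (Icc s₀ t) s₀ := by
        have := aux_leibniz (fun s y => Fe (q2*s) y * z y (t-s))
          (fun σ y => Fx (q2*σ) y * q2 * z y (t-σ) + Fe (q2*σ) y * (zt y (t-σ) * (-1)))
          s₀ t q2 (q2*s₀) 1 hs₀t (le_of_lt hq2) hx₀0
          (by
            intro s hs
            have : q2*s₀ + q2 * (s - s₀) = q2 * s := by ring
            rw [this]
            exact (hmapx s ⟨le_trans hs₀0 hs.1, hs.2⟩).2)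
          (hφFc.mono (by
            apply prod_mono_left
            exact Icc_subset_Icc hs₀0 (le_refl _)))
          (by
            -- the s-derivative of the integrand
            intro σ hσ y hy
            have hyq2σ : y ≤ q2 * σ := le_trans hy.2
              (mul_le_mul_of_nonneg_left hσ.1 (le_of_lt hq2))
            have hq2σ1 : q2 * σ ≤ 1 :=
              (hmapx σ ⟨le_trans hs₀0 hσ.1, hσ.2⟩).2
            have hτσ : t - σ ∈ Icc (0:ℝ) (1/q2) := hmapt σ ⟨le_trans hs₀0 hσ.1, hσ.2⟩
            have hy01 : y ∈ Icc (0:ℝ) 1 := ⟨hy.1, le_trans hy.2 hx₀1⟩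
            have hinner1 : HasDerivWithinAt (fun s : ℝ => q2 * s) q2 (Icc s₀ t) σ :=
              by simpa using ((hasDerivAt_id σ).const_mul q2).hasDerivWithinAt
            have hFpart : HasDerivWithinAt (fun s => F (q2*s) y) (Fx (q2*σ) y * q2)
                (Icc s₀ t) σ := by
              apply HasDerivWithinAt.comp_of_eq σ
                (hFx (q2*σ) y hy.1 hyq2σ hq2σ1) hinner1 ?_ rfl
              intro s hs
              exact ⟨le_trans hy.2 (mul_le_mul_of_nonneg_left hs.1 (le_of_lt hq2)),
                (hmapx s ⟨le_trans hs₀0 hs.1, hs.2⟩).2⟩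
            have hFepart : HasDerivWithinAt (fun s => Fe (q2*s) y) (Fx (q2*σ) y * q2)
                (Icc s₀ t) σ := by
              apply hFpart.congr
              · intro s hs
                exact hFeEq _ y (le_trans hy.2
                  (mul_le_mul_of_nonneg_left hs.1 (le_of_lt hq2)))
              · exact hFeEq _ y hyq2σ
            have hinner2 : HasDerivWithinAt (fun s : ℝ => t - s) (-1 : ℝ) (Icc s₀ t) σ := by
              simpa using ((hasDerivAt_id' (x := σ)).const_sub t).hasDerivWithinAt
            have hzpart : HasDerivWithinAt (fun s => z y (t-s)) (zt y (t-σ) * (-1))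
                (Icc s₀ t) σ := by
              apply HasDerivWithinAt.comp_of_eq σ (hzt y hy01 (t-σ) hτσ) hinner2 ?_ rfl
              intro s hs
              exact hmapt s ⟨le_trans hs₀0 hs.1, hs.2⟩
            exact hFepart.mul hzpart)
          (by
            -- continuity of the s-derivative of the integrand
            apply ContinuousOn.add
            · apply ContinuousOn.mul
              · apply ContinuousOn.mul
                · apply hFxc.comp ((continuous_const.mul continuous_fst).prodMk
                    continuous_snd).continuousOn
                  intro p hp
                  refine ⟨hp.2.1, le_trans hp.2.2 ?_,
                    (hmapx p.1 ⟨le_trans hs₀0 hp.1.1, hp.1.2⟩).2⟩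
                  exact mul_le_mul_of_nonneg_left hp.1.1 (le_of_lt hq2)
                · exact continuousOn_const
              · apply hzc.comp (continuous_snd.prodMk
                  (continuous_const.sub continuous_fst)).continuousOn
                intro p hp
                exact ⟨⟨hp.2.1, le_trans hp.2.2 hx₀1⟩,
                  hmapt p.1 ⟨le_trans hs₀0 hp.1.1, hp.1.2⟩⟩
            · apply ContinuousOn.mul
              · apply hFeC.comp ((continuous_const.mul continuous_fst).prodMk
                  continuous_snd).continuousOn
                intro p hp
                exact ⟨hmapx p.1 ⟨le_trans hs₀0 hp.1.1, hp.1.2⟩,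
                  ⟨hp.2.1, le_trans hp.2.2 hx₀1⟩⟩
              · apply ContinuousOn.mul
                · apply hztc.comp (continuous_snd.prodMk
                    (continuous_const.sub continuous_fst)).continuousOn
                  intro p hp
                  exact ⟨⟨hp.2.1, le_trans hp.2.2 hx₀1⟩,
                    hmapt p.1 ⟨le_trans hs₀0 hp.1.1, hp.1.2⟩⟩
                · exact continuousOn_const)
        have hfun : (fun s => ∫ y in (0:ℝ)..(q2*s₀ + q2 * (s - s₀)), Fe (q2*s) y * z y (t-s))
            = fun s => ∫ y in (0:ℝ)..(q2*s), Fe (q2*s) y * z y (t-s) := by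
          funext s
          have : q2*s₀ + q2 * (s - s₀) = q2 * s := by ring
          rw [this]
        rwa [hfun] at this
      have P3 : HasDerivWithinAt
          (fun s => ∫ y in (0:ℝ)..(q2*s), He (q2*s) y * w y (t-s))
          (q2 * (He (q2*s₀) (q2*s₀) * w (q2*s₀) (t-s₀))
            + ∫ y in (0:ℝ)..(q2*s₀), (Hx (q2*s₀) y * q2 * w y (t-s₀)
              + He (q2*s₀) y * (wt y (t-s₀) * (-1)))) (Icc s₀ t) s₀ := by
        have := aux_leibniz (fun s y => He (q2*s) y * w y (t-s))
          (fun σ y => Hx (q2*σ) y * q2 * w y (t-σ) + He (q2*σ) y * (wt y (t-σ) * (-1)))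
          s₀ t q2 (q2*s₀) 1 hs₀t (le_of_lt hq2) hx₀0
          (by
            intro s hs
            have : q2*s₀ + q2 * (s - s₀) = q2 * s := by ring
            rw [this]
            exact (hmapx s ⟨le_trans hs₀0 hs.1, hs.2⟩).2)
          (hφHc.mono (by
            apply prod_mono_left
            exact Icc_subset_Icc hs₀0 (le_refl _)))
          (by
            intro σ hσ y hy
            have hyq2σ : y ≤ q2 * σ := le_trans hy.2
              (mul_le_mul_of_nonneg_left hσ.1 (le_of_lt hq2))
            have hq2σ1 : q2 * σ ≤ 1 :=
              (hmapx σ ⟨le_trans hs₀0 hσ.1, hσ.2⟩).2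
            have hτσ : t - σ ∈ Icc (0:ℝ) (1/q2) := hmapt σ ⟨le_trans hs₀0 hσ.1, hσ.2⟩
            have hy01 : y ∈ Icc (0:ℝ) 1 := ⟨hy.1, le_trans hy.2 hx₀1⟩
            have hinner1 : HasDerivWithinAt (fun s : ℝ => q2 * s) q2 (Icc s₀ t) σ := by
              simpa using ((hasDerivAt_id σ).const_mul q2).hasDerivWithinAt
            have hHpart : HasDerivWithinAt (fun s => H (q2*s) y) (Hx (q2*σ) y * q2)
                (Icc s₀ t) σ := by
              apply HasDerivWithinAt.comp_of_eq σ
                (hHx (q2*σ) y hy.1 hyq2σ hq2σ1) hinner1 ?_ rfl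
              intro s hs
              exact ⟨le_trans hy.2 (mul_le_mul_of_nonneg_left hs.1 (le_of_lt hq2)),
                (hmapx s ⟨le_trans hs₀0 hs.1, hs.2⟩).2⟩
            have hHepart : HasDerivWithinAt (fun s => He (q2*s) y) (Hx (q2*σ) y * q2)
                (Icc s₀ t) σ := by
              apply hHpart.congr
              · intro s hs
                exact hHeEq _ y (le_trans hy.2
                  (mul_le_mul_of_nonneg_left hs.1 (le_of_lt hq2)))
              · exact hHeEq _ y hyq2σ
            have hinner2 : HasDerivWithinAt (fun s : ℝ => t - s) (-1 : ℝ) (Icc s₀ t) σ := by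
              simpa using ((hasDerivAt_id' (x := σ)).const_sub t).hasDerivWithinAt
            have hwpart : HasDerivWithinAt (fun s => w y (t-s)) (wt y (t-σ) * (-1))
                (Icc s₀ t) σ := by
              apply HasDerivWithinAt.comp_of_eq σ (hwt y hy01 (t-σ) hτσ) hinner2 ?_ rfl
              intro s hs
              exact hmapt s ⟨le_trans hs₀0 hs.1, hs.2⟩
            exact hHepart.mul hwpart)
          (by
            apply ContinuousOn.add
            · apply ContinuousOn.mul
              · apply ContinuousOn.mul
                · apply hHxc.comp ((continuous_const.mul continuous_fst).prodMk
                    continuous_snd).continuousOn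
                  intro p hp
                  refine ⟨hp.2.1, le_trans hp.2.2 ?_,
                    (hmapx p.1 ⟨le_trans hs₀0 hp.1.1, hp.1.2⟩).2⟩
                  exact mul_le_mul_of_nonneg_left hp.1.1 (le_of_lt hq2)
                · exact continuousOn_const
              · apply hwc.comp (continuous_snd.prodMk
                  (continuous_const.sub continuous_fst)).continuousOn
                intro p hp
                exact ⟨⟨hp.2.1, le_trans hp.2.2 hx₀1⟩,
                  hmapt p.1 ⟨le_trans hs₀0 hp.1.1, hp.1.2⟩⟩
            · apply ContinuousOn.mul
              · apply hHeC.comp ((continuous_const.mul continuous_fst).prodMk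
                  continuous_snd).continuousOn
                intro p hp
                exact ⟨hmapx p.1 ⟨le_trans hs₀0 hp.1.1, hp.1.2⟩,
                  ⟨hp.2.1, le_trans hp.2.2 hx₀1⟩⟩
              · apply ContinuousOn.mul
                · apply hwtc.comp (continuous_snd.prodMk
                    (continuous_const.sub continuous_fst)).continuousOn
                  intro p hp
                  exact ⟨⟨hp.2.1, le_trans hp.2.2 hx₀1⟩,
                    hmapt p.1 ⟨le_trans hs₀0 hp.1.1, hp.1.2⟩⟩
                · exact continuousOn_const)
        have hfun : (fun s => ∫ y in (0:ℝ)..(q2*s₀ + q2 * (s - s₀)), He (q2*s) y * w y (t-s))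
            = fun s => ∫ y in (0:ℝ)..(q2*s), He (q2*s) y * w y (t-s) := by
          funext s
          have : q2*s₀ + q2 * (s - s₀) = q2 * s := by ring
          rw [this]
        rwa [hfun] at this
      -- slices for the algebra
      have hym : ∀ y ∈ Icc (0:ℝ) (q2*s₀), y ∈ Icc (0:ℝ) 1 :=
        fun y hy => ⟨hy.1, le_trans hy.2 hx₀1⟩
      have htri : ∀ y ∈ Icc (0:ℝ) (q2*s₀),
          ((q2*s₀, y) : ℝ×ℝ) ∈ {q : ℝ × ℝ | 0 ≤ q.2 ∧ q.2 ≤ q.1 ∧ q.1 ≤ 1} :=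
        fun y hy => ⟨hy.1, hy.2, hx₀1⟩
      have hmapy : ContinuousOn (fun y : ℝ => ((q2*s₀, y) : ℝ×ℝ)) (Icc 0 (q2*s₀)) :=
        (continuous_const.prodMk continuous_id).continuousOn
      have hmapz : ContinuousOn (fun y : ℝ => ((y, t-s₀) : ℝ×ℝ)) (Icc 0 (q2*s₀)) :=
        (continuous_id.prodMk continuous_const).continuousOn
      have hzsl : ContinuousOn (fun y => z y (t-s₀)) (Icc 0 (q2*s₀)) :=
        hzc.comp hmapz (fun y hy => ⟨hym y hy, hτ₀mem⟩)
      have hwsl : ContinuousOn (fun y => w y (t-s₀)) (Icc 0 (q2*s₀)) :=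
        hwc.comp hmapz (fun y hy => ⟨hym y hy, hτ₀mem⟩)
      have hzxsl : ContinuousOn (fun y => zx y (t-s₀)) (Icc 0 (q2*s₀)) :=
        hzxc.comp hmapz (fun y hy => ⟨hym y hy, hτ₀mem⟩)
      have hwxsl : ContinuousOn (fun y => wx y (t-s₀)) (Icc 0 (q2*s₀)) :=
        hwxc.comp hmapz (fun y hy => ⟨hym y hy, hτ₀mem⟩)
      have hFsl : ContinuousOn (fun y => F (q2*s₀) y) (Icc 0 (q2*s₀)) :=
        hFc.comp hmapy htri
      have hHsl : ContinuousOn (fun y => H (q2*s₀) y) (Icc 0 (q2*s₀)) :=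
        hHc.comp hmapy htri
      have hFysl : ContinuousOn (fun y => Fy (q2*s₀) y) (Icc 0 (q2*s₀)) :=
        hFyc.comp hmapy htri
      have hHysl : ContinuousOn (fun y => Hy (q2*s₀) y) (Icc 0 (q2*s₀)) :=
        hHyc.comp hmapy htri
      have mkInt : ∀ {f : ℝ → ℝ}, ContinuousOn f (Icc 0 (q2*s₀)) →
          IntervalIntegrable f volume 0 (q2*s₀) := by
        intro f hf
        apply ContinuousOn.intervalIntegrable
        rwa [uIcc_of_le hx₀0]
      -- integration by parts (FTC) for the kernel products
      have mkIoi : ∀ y ∈ Ioo (0:ℝ) (q2*s₀), Icc (0:ℝ) (q2*s₀) ∈ nhdsWithin y (Ioi y) := by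
        intro y hy
        refine Filter.mem_of_superset
          (Ioc_mem_nhdsGT_of_mem ⟨le_refl y, hy.2⟩) ?_
        exact fun a ha => ⟨le_trans hy.1.le ha.1.le, ha.2⟩
      have ibpF : (∫ y in (0:ℝ)..(q2*s₀),
            (Fy (q2*s₀) y * z y (t-s₀) + F (q2*s₀) y * zx y (t-s₀)))
          = F (q2*s₀) (q2*s₀) * z (q2*s₀) (t-s₀) - F (q2*s₀) 0 * z 0 (t-s₀) := by
        apply integral_eq_sub_of_hasDeriv_right_of_le hx₀0 (hFsl.mul hzsl)
        · intro y hy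
          have hymem : y ∈ Icc (0:ℝ) (q2*s₀) := ⟨hy.1.le, hy.2.le⟩
          have hd1 : HasDerivWithinAt (fun y' => F (q2*s₀) y') (Fy (q2*s₀) y)
              (Icc 0 (q2*s₀)) y := hFy (q2*s₀) y hy.1.le hy.2.le hx₀1
          have hd2 : HasDerivWithinAt (fun y' => z y' (t-s₀)) (zx y (t-s₀))
              (Icc 0 (q2*s₀)) y := (hzx y (hym y hymem) (t-s₀) hτ₀mem).mono hsub01
          exact ((hd1.mul hd2).mono_of_mem_nhdsWithin (mkIoi y hy))
        · exact mkInt ((hFysl.mul hzsl).add (hFsl.mul hzxsl))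
      have ibpH : (∫ y in (0:ℝ)..(q2*s₀),
            (Hy (q2*s₀) y * w y (t-s₀) + H (q2*s₀) y * wx y (t-s₀)))
          = H (q2*s₀) (q2*s₀) * w (q2*s₀) (t-s₀) - H (q2*s₀) 0 * w 0 (t-s₀) := by
        apply integral_eq_sub_of_hasDeriv_right_of_le hx₀0 (hHsl.mul hwsl)
        · intro y hy
          have hymem : y ∈ Icc (0:ℝ) (q2*s₀) := ⟨hy.1.le, hy.2.le⟩
          have hd1 : HasDerivWithinAt (fun y' => H (q2*s₀) y') (Hy (q2*s₀) y)
              (Icc 0 (q2*s₀)) y := hHy (q2*s₀) y hy.1.le hy.2.le hx₀1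
          have hd2 : HasDerivWithinAt (fun y' => w y' (t-s₀)) (wx y (t-s₀))
              (Icc 0 (q2*s₀)) y := (hwx y (hym y hymem) (t-s₀) hτ₀mem).mono hsub01
          exact ((hd1.mul hd2).mono_of_mem_nhdsWithin (mkIoi y hy))
        · exact mkInt ((hHysl.mul hwsl).add (hHsl.mul hwxsl))
      -- closed form for the two parameter integrals
      have hIFeq : (∫ y in (0:ℝ)..(q2*s₀), (Fx (q2*s₀) y * q2 * z y (t-s₀)
            + Fe (q2*s₀) y * (zt y (t-s₀) * (-1))))
          = d2 * (∫ y in (0:ℝ)..(q2*s₀), H (q2*s₀) y * z y (t-s₀))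
            + q1 * (F (q2*s₀) (q2*s₀) * z (q2*s₀) (t-s₀) - F (q2*s₀) 0 * z 0 (t-s₀))
            - d1 * (∫ y in (0:ℝ)..(q2*s₀), F (q2*s₀) y * w y (t-s₀)) := by
        have hpt : ∀ y ∈ uIcc (0:ℝ) (q2*s₀),
            Fx (q2*s₀) y * q2 * z y (t-s₀) + Fe (q2*s₀) y * (zt y (t-s₀) * (-1))
            = d2 * (H (q2*s₀) y * z y (t-s₀))
              + q1 * (Fy (q2*s₀) y * z y (t-s₀) + F (q2*s₀) y * zx y (t-s₀))
              - d1 * (F (q2*s₀) y * w y (t-s₀)) := by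
          intro y hy
          rw [uIcc_of_le hx₀0] at hy
          rw [hFeEq _ y hy.2, hzpde y (hym y hy) (t-s₀) hτ₀mem]
          have hF := hFpde (q2*s₀) y hy.1 hy.2 hx₀1
          linear_combination z y (t-s₀) * hF
        erw [intervalIntegral.integral_congr hpt,
          integral_sub (((mkInt (hHsl.mul hzsl)).const_mul d2).add
            ((mkInt ((hFysl.mul hzsl).add (hFsl.mul hzxsl))).const_mul q1))
            ((mkInt (hFsl.mul hwsl)).const_mul d1),
          integral_add ((mkInt (hHsl.mul hzsl)).const_mul d2)
            ((mkInt ((hFysl.mul hzsl).add (hFsl.mul hzxsl))).const_mul q1),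
          intervalIntegral.integral_const_mul, intervalIntegral.integral_const_mul,
          intervalIntegral.integral_const_mul, ibpF]
        rfl
      have hIHeq : (∫ y in (0:ℝ)..(q2*s₀), (Hx (q2*s₀) y * q2 * w y (t-s₀)
            + He (q2*s₀) y * (wt y (t-s₀) * (-1))))
          = d1 * (∫ y in (0:ℝ)..(q2*s₀), F (q2*s₀) y * w y (t-s₀))
            - q2 * (H (q2*s₀) (q2*s₀) * w (q2*s₀) (t-s₀) - H (q2*s₀) 0 * w 0 (t-s₀))
            - d2 * (∫ y in (0:ℝ)..(q2*s₀), H (q2*s₀) y * z y (t-s₀)) := by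
        have hpt : ∀ y ∈ uIcc (0:ℝ) (q2*s₀),
            Hx (q2*s₀) y * q2 * w y (t-s₀) + He (q2*s₀) y * (wt y (t-s₀) * (-1))
            = d1 * (F (q2*s₀) y * w y (t-s₀))
              - q2 * (Hy (q2*s₀) y * w y (t-s₀) + H (q2*s₀) y * wx y (t-s₀))
              - d2 * (H (q2*s₀) y * z y (t-s₀)) := by
          intro y hy
          rw [uIcc_of_le hx₀0] at hy
          rw [hHeEq _ y hy.2, hwpde y (hym y hy) (t-s₀) hτ₀mem]
          have hH := hHpde (q2*s₀) y hy.1 hy.2 hx₀1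
          linear_combination w y (t-s₀) * hH
        erw [intervalIntegral.integral_congr hpt,
          integral_sub (((mkInt (hFsl.mul hwsl)).const_mul d1).sub
            ((mkInt ((hHysl.mul hwsl).add (hHsl.mul hwxsl))).const_mul q2))
            ((mkInt (hHsl.mul hzsl)).const_mul d2),
          integral_sub ((mkInt (hFsl.mul hwsl)).const_mul d1)
            ((mkInt ((hHysl.mul hwsl).add (hHsl.mul hwxsl))).const_mul q2),
          intervalIntegral.integral_const_mul, intervalIntegral.integral_const_mul,
          intervalIntegral.integral_const_mul, ibpH]
        rfl
      -- total derivative vanishes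
      have hfinal := (P1.sub P2).sub P3
      have hval : (q2 * wx (q2*s₀) (t-s₀) + (-1) * wt (q2*s₀) (t-s₀))
          - (q2 * (Fe (q2*s₀) (q2*s₀) * z (q2*s₀) (t-s₀))
            + ∫ y in (0:ℝ)..(q2*s₀), (Fx (q2*s₀) y * q2 * z y (t-s₀)
              + Fe (q2*s₀) y * (zt y (t-s₀) * (-1))))
          - (q2 * (He (q2*s₀) (q2*s₀) * w (q2*s₀) (t-s₀))
            + ∫ y in (0:ℝ)..(q2*s₀), (Hx (q2*s₀) y * q2 * w y (t-s₀)
              + He (q2*s₀) y * (wt y (t-s₀) * (-1)))) = 0 := by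
        rw [hIFeq, hIHeq, hFeEq _ _ (le_refl _), hHeEq _ _ (le_refl _),
          hwpde (q2*s₀) hx₀mem (t-s₀) hτ₀mem, hFbc (q2*s₀) hx₀mem,
          hHbc (q2*s₀) hx₀mem, hzwbc (t-s₀) hτ₀mem]
        have h12 : q1 + q2 ≠ 0 := by positivity
        field_simp
        ring
      rw [hval] at hfinal
      exact hfinal.mono_of_mem_nhdsWithin
        (nhdsWithin_Icc_eq_nhdsGE hs₀t ▸ self_mem_nhdsWithin)
    -- g is constant: evaluate at t and 0
    have hconst := constant_of_has_deriv_right_zero hgc hgd t ⟨le_of_lt h0, le_refl t⟩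
    have hg0 : g 0 = w 0 t := by
      rw [hgdef]
      simp
    have hq2t0 : (0:ℝ) ≤ q2 * t := mul_nonneg (le_of_lt hq2) ht.1
    have hgt : g t = w (q2*t) 0 - (∫ y in (0:ℝ)..(q2*t), F (q2*t) y * z y 0)
        - ∫ y in (0:ℝ)..(q2*t), H (q2*t) y * w y 0 := by
      rw [hgdef]
      simp only [sub_self]
      congr 1
      · congr 1
        apply intervalIntegral.integral_congr
        intro y hy
        rw [uIcc_of_le hq2t0] at hy
        show Fe (q2*t) y * z y 0 = F (q2*t) y * z y 0
        rw [hFeEq _ y hy.2]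
      · apply intervalIntegral.integral_congr
        intro y hy
        rw [uIcc_of_le hq2t0] at hy
        show He (q2*t) y * w y 0 = H (q2*t) y * w y 0
        rw [hHeEq _ y hy.2]
    rw [← hg0, hconst.symm.trans hgt]


  -- Part 2: Duhamel formula for the ODE
  letI : SeminormedRing (Matrix (Fin n) (Fin n) ℝ) := Matrix.linftyOpSemiNormedRing
  letI : NormedRing (Matrix (Fin n) (Fin n) ℝ) := Matrix.linftyOpNormedRing
  letI : NormedAlgebra ℝ (Matrix (Fin n) (Fin n) ℝ) := Matrix.linftyOpNormedAlgebra
  set E : ℝ → Matrix (Fin n) (Fin n) ℝ := fun s => NormedSpace.exp ((-s) • A) with hE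
  -- derivative of the entries of E
  have hEd : ∀ t : ℝ, HasDerivAt E ((-1 : ℝ) • (A * E t)) t := by
    intro t
    have h1 : HasDerivAt (fun u : ℝ => NormedSpace.exp (u • A))
        (A * NormedSpace.exp ((-t) • A)) (-t) := hasDerivAt_exp_smul_const' (𝕂 := ℝ) A (-t)
    have h2 : HasDerivAt (fun t : ℝ => -t) (-1 : ℝ) t := (hasDerivAt_id t).neg
    have := HasDerivAt.scomp t h1 h2
    exact this
  have hEntry : ∀ (t : ℝ) (i j : Fin n),
      HasDerivAt (fun u => E u i j) (-((A * E t) i j)) t := by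
    intro t i j
    let L : Matrix (Fin n) (Fin n) ℝ →ₗ[ℝ] ℝ :=
      { toFun := fun M => M i j, map_add' := fun M N => rfl, map_smul' := fun c M => rfl }
    have := (L.toContinuousLinearMap.hasFDerivAt (x := E t)).comp_hasDerivAt t (hEd t)
    rw [neg_one_smul] at this
    exact this
  have hEcont : ∀ i j, Continuous (fun s => E s i j) := by
    intro i j
    exact continuous_iff_continuousAt.2 (fun t => (hEntry t i j).continuousAt)
  -- the clamped control input
  set clamp : ℝ → ℝ := fun s => max 0 (min s (1/q2)) with hclamp
  have hclampmem : ∀ s : ℝ, clamp s ∈ Icc (0:ℝ) (1/q2) := by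
    intro s
    constructor
    · exact le_max_left _ _
    · exact max_le (le_of_lt hT0) (min_le_right _ _)
  have hclampeq : ∀ s ∈ Icc (0:ℝ) (1/q2), clamp s = s := by
    intro s hs
    rw [hclamp]
    simp only [min_eq_left hs.2, max_eq_right hs.1]
  have hwcl : Continuous (fun s => w 0 (clamp s)) := by
    have hcl : Continuous clamp := continuous_const.max (continuous_id.min continuous_const)
    exact hwc.comp_continuous (continuous_const.prodMk hcl)
      (fun s => ⟨⟨le_refl (0:ℝ), zero_le_one⟩, hclampmem s⟩)
  set ψ : Fin n → ℝ → ℝ := fun i s => w 0 (clamp s) * ((E s).mulVec B) i with hψ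
  have hψcont : ∀ i, Continuous (ψ i) := by
    intro i
    apply hwcl.mul
    have : (fun s => ((E s).mulVec B) i) = fun s => ∑ j, E s i j * B j := by
      funext s; simp [Matrix.mulVec, dotProduct]
    rw [this]
    exact continuous_finset_sum _ (fun j _ => (hEcont i j).mul continuous_const)
  -- primitive of ψ is continuous
  have hprim : ∀ i, Continuous (fun t => ∫ s in (0:ℝ)..t, ψ i s) := by
    intro i
    exact intervalIntegral.continuous_primitive
      (fun a b => (hψcont i).intervalIntegrable a b) 0
  set Vi : Fin n → ℝ → ℝ :=
    fun i t => ((E t).mulVec (Y t)) i - ∫ s in (0:ℝ)..t, ψ i s with hVi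
  have hYicont : ∀ i, ContinuousOn (fun t => Y t i) (Icc 0 (1/q2)) := fun i t ht =>
    ((hasDerivAt_pi.1 (hY t ht) i).continuousAt).continuousWithinAt
  have hsum_expr : ∀ (i : Fin n) (t : ℝ), ((E t).mulVec (Y t)) i = ∑ j, E t i j * Y t j := by
    intro i t; simp [Matrix.mulVec, dotProduct]
  have hVicont : ∀ i, ContinuousOn (Vi i) (Icc 0 (1/q2)) := by
    intro i
    apply ContinuousOn.sub
    · have : (fun t => ((E t).mulVec (Y t)) i) = fun t => ∑ j, E t i j * Y t j := by
        funext u; exact hsum_expr i u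
      rw [this]
      exact continuousOn_finset_sum _ (fun j _ => ((hEcont i j).continuousOn).mul (hYicont j))
    · exact (hprim i).continuousOn
  have hVideriv : ∀ i, ∀ t ∈ Ico (0:ℝ) (1/q2), HasDerivWithinAt (Vi i) 0 (Ici t) t := by
    intro i t ht
    have htmem : t ∈ Icc (0:ℝ) (1/q2) := ⟨ht.1, le_of_lt ht.2⟩
    have h1 : HasDerivAt (fun u => ∑ j, E u i j * Y u j)
        (∑ j, (-((A * E t) i j) * Y t j + E t i j * ((A.mulVec (Y t) + w 0 t • B) j))) t := by
      apply HasDerivAt.fun_sum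
      intro j _
      exact (hEntry t i j).mul (hasDerivAt_pi.1 (hY t htmem) j)
    have h1' : HasDerivAt (fun u => ((E u).mulVec (Y u)) i)
        (∑ j, (-((A * E t) i j) * Y t j + E t i j * ((A.mulVec (Y t) + w 0 t • B) j))) t := by
      have heq : (fun u => ((E u).mulVec (Y u)) i) = fun u => ∑ j, E u i j * Y u j := by
        funext u; exact hsum_expr i u
      rw [heq]; exact h1
    have h2 : HasDerivAt (fun u => ∫ s in (0:ℝ)..u, ψ i s) (ψ i t) t :=
      intervalIntegral.integral_hasDerivAt_right ((hψcont i).intervalIntegrable _ _)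
        ((hψcont i).stronglyMeasurableAtFilter _ _) (hψcont i).continuousAt
    have hcomm : Commute A (E t) := ((Commute.refl A).smul_right (-t)).exp_right
    have hmv : (E t).mulVec (A.mulVec (Y t)) = (A * E t).mulVec (Y t) := by
      rw [Matrix.mulVec_mulVec, hcomm.eq]
    have e1 : ∑ j, (-((A * E t) i j) * Y t j) = -(((A * E t).mulVec (Y t)) i) := by
      simp [Matrix.mulVec, dotProduct, neg_mul]
    have e2 : ∑ j, E t i j * (A.mulVec (Y t)) j = ((E t).mulVec (A.mulVec (Y t))) i := by
      simp [Matrix.mulVec, dotProduct]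
    have e3 : ∑ j, E t i j * (w 0 t * B j) = w 0 t * ((E t).mulVec B) i := by
      simp only [Matrix.mulVec, dotProduct, Finset.mul_sum]
      apply Finset.sum_congr rfl
      intro j _; ring
    have hD : (∑ j, (-((A * E t) i j) * Y t j
        + E t i j * ((A.mulVec (Y t) + w 0 t • B) j))) = ψ i t := by
      have hstep : ∀ j : Fin n, -((A * E t) i j) * Y t j
          + E t i j * ((A.mulVec (Y t) + w 0 t • B) j)
          = (-((A * E t) i j) * Y t j) + (E t i j * (A.mulVec (Y t)) j
            + E t i j * (w 0 t * B j)) := by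
        intro j
        simp only [Pi.add_apply, Pi.smul_apply, smul_eq_mul]
        ring
      rw [Finset.sum_congr rfl (fun j _ => hstep j), Finset.sum_add_distrib,
        Finset.sum_add_distrib, e1, e2, e3, hmv]
      simp only [hψ]
      rw [hclampeq t htmem]
      ring
    have := (h1'.sub h2)
    rw [hD, sub_self] at this
    exact this.hasDerivWithinAt
  have hVconst : ∀ i, ∀ t ∈ Icc (0:ℝ) (1/q2), Vi i t = Vi i 0 := fun i =>
    constant_of_has_deriv_right_zero (hVicont i) (hVideriv i)
  have hE0 : E 0 = 1 := by rw [hE]; simp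
  have hVi0 : ∀ i, Vi i 0 = Y 0 i := by
    intro i
    rw [hVi]
    simp [hE0, Matrix.one_mulVec]
  have hId : ∀ t ∈ Icc (0:ℝ) (1/q2),
      (E t).mulVec (Y t) = fun i => Y 0 i + ∫ s in (0:ℝ)..t, ψ i s := by
    intro t ht
    funext i
    have := hVconst i t ht
    rw [hVi0 i] at this
    have h2 : ((E t).mulVec (Y t)) i - (∫ s in (0:ℝ)..t, ψ i s) = Y 0 i := this
    linarith [h2]
  have hYrep : ∀ t ∈ Icc (0:ℝ) (1/q2),
      Y t = (NormedSpace.exp (t • A)).mulVec (fun i => Y 0 i + ∫ s in (0:ℝ)..t, ψ i s) := by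
    intro t ht
    have hinv : NormedSpace.exp (t • A) * E t = 1 := by
      rw [hE, ← Matrix.exp_add_of_commute _ _ (((Commute.refl A).smul_left t).smul_right (-t))]
      rw [← add_smul]
      simp
    calc Y t = (1 : Matrix (Fin n) (Fin n) ℝ).mulVec (Y t) := (Matrix.one_mulVec _).symm
      _ = (NormedSpace.exp (t • A) * E t).mulVec (Y t) := by rw [hinv]
      _ = (NormedSpace.exp (t • A)).mulVec ((E t).mulVec (Y t)) := by
          rw [← Matrix.mulVec_mulVec]
      _ = _ := by rw [hId t ht]
  -- key: relation with Pifun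
  have hEBcont : Continuous (fun s => (E s).mulVec B) := by
    apply continuous_pi
    intro i
    have : (fun s => ((E s).mulVec B) i) = fun s => ∑ j, E s i j * B j := by
      funext s; simp [Matrix.mulVec, dotProduct]
    rw [this]
    exact continuous_finset_sum _ (fun j _ => (hEcont i j).mul continuous_const)
  have hkey : ∀ t ∈ Icc (0:ℝ) (1/q2), Y t ⟨0, hn⟩ = Pifun (q2 * t) := by
    intro t ht
    rw [hPi (q2 * t)]
    have htq : q2 * t / q2 = t := by field_simp
    rw [htq]
    set G : ℝ → Fin n → ℝ := fun x => (w x 0 - (∫ y in (0:ℝ)..x, F x y * z y 0)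
        - ∫ y in (0:ℝ)..x, H x y * w y 0) • (NormedSpace.exp ((-(x / q2)) • A)).mulVec B
      with hG
    have hchg : (∫ x in (0:ℝ)..(q2*t), G x) = q2 • ∫ s in (0:ℝ)..t, G (q2*s) := by
      have h := intervalIntegral.smul_integral_comp_mul_left (a := 0) (b := t) G q2
      rw [mul_zero] at h
      exact h.symm
    have hGq : ∀ s ∈ uIcc (0:ℝ) t, G (q2*s) = w 0 (clamp s) • ((E s).mulVec B) := by
      intro s hs
      rw [uIcc_of_le ht.1] at hs
      have hsmem : s ∈ Icc (0:ℝ) (1/q2) := ⟨hs.1, le_trans hs.2 ht.2⟩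
      have h1 : -(q2 * s / q2) = -s := by field_simp
      rw [hG]
      simp only
      rw [h1, ← charac s hsmem, hclampeq s hsmem, hE]
    have hGint : (∫ s in (0:ℝ)..t, G (q2*s))
        = ∫ s in (0:ℝ)..t, w 0 (clamp s) • ((E s).mulVec B) :=
      intervalIntegral.integral_congr hGq
    have hJint : IntervalIntegrable (fun s => w 0 (clamp s) • ((E s).mulVec B)) volume 0 t :=
      (hwcl.smul hEBcont).intervalIntegrable _ _
    have hproj : ∀ i : Fin n,
        (∫ s in (0:ℝ)..t, w 0 (clamp s) • ((E s).mulVec B)) i = ∫ s in (0:ℝ)..t, ψ i s := by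
      intro i
      have h := (ContinuousLinearMap.proj (R := ℝ) (φ := fun _ : Fin n => ℝ)
        i).intervalIntegral_comp_comm hJint
      calc (∫ s in (0:ℝ)..t, w 0 (clamp s) • ((E s).mulVec B)) i
          = ∫ s in (0:ℝ)..t, (w 0 (clamp s) • ((E s).mulVec B)) i := by
            simpa using h.symm
        _ = ∫ s in (0:ℝ)..t, ψ i s := by
            apply intervalIntegral.integral_congr
            intro s _
            simp [hψ]
    rw [hYrep t ht]
    have hsplit : (NormedSpace.exp (t • A)).mulVec
          (fun i => Y 0 i + ∫ s in (0:ℝ)..t, ψ i s)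
        = (NormedSpace.exp (t • A)).mulVec (Y 0)
          + (NormedSpace.exp (t • A)).mulVec (fun i => ∫ s in (0:ℝ)..t, ψ i s) := by
      rw [← Matrix.mulVec_add]
      rfl
    rw [hsplit]
    have hQJ : (fun i => ∫ s in (0:ℝ)..t, ψ i s)
        = ∫ s in (0:ℝ)..t, w 0 (clamp s) • ((E s).mulVec B) := by
      funext i
      exact (hproj i).symm
    rw [hchg, hGint, ← hQJ]
    simp only [Pi.add_apply]
    congr 1
    rw [Matrix.mulVec_smul]
    simp only [Pi.smul_apply, smul_eq_mul]
    field_simp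
  -- conclusion
  constructor
  · intro t ht
    rcases eq_or_lt_of_le ht.1 with h0 | h0
    · rw [← h0]; exact hY0
    · have htmem : t ∈ Icc (0:ℝ) (1/q2) := ⟨ht.1, le_of_lt ht.2⟩
      rw [hkey t htmem]
      apply hPi0
      constructor
      · positivity
      · have : q2 * t < q2 * (1/q2) := by
          apply mul_lt_mul_of_pos_left ht.2 hq2
        rwa [mul_one_div_cancel hq2'] at this
  · have htmem : (1/q2 : ℝ) ∈ Icc (0:ℝ) (1/q2) := ⟨le_of_lt hT0, le_refl _⟩
    rw [hkey _ htmem, mul_one_div_cancel hq2']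
    exact hPi1
end

section
/- Let q1, q2 > 0, d1, d2 ∈ ℝ, p ∈ ℝ with p ≠ 0, let n ≥ 1, let A be an n×n real matrix, B ∈ ℝⁿ, and K ∈ ℝⁿ. Define λ(x) = Kᵀ e^{Ax/q2} and γ(x) = p Kᵀ e^{−Ax/q1} (row-vector-valued functions on [0,1]). Let φ, ψ, Ψ, Φ : 𝒟 → ℝ be continuously differentiable on the triangle 𝒟 = {(x,y) : 0 ≤ y ≤ x ≤ 1} and satisfy q2 ∂y ψ − q1 ∂x ψ − d1 φ = 0, q1 ∂x φ + q1 ∂y φ + d2 ψ = 0, q2 ∂x Ψ − q1 ∂y Ψ − d2 Φ = 0, q2 ∂x Φ + q2 ∂y Φ − d1 Ψ = 0 on 𝒟, with boundary conditions ψ(x,x) = d1/(q1+q2), φ(x,0) = (q2/(q1 p)) ψ(x,0) − (1/(q1 p)) γ(x)B, Ψ(x,x) = −d2/(q1+q2), Φ(x,0) = (q1 p/q2) Ψ(x,0) + (1/q2) λ(x)B for x ∈ [0,1]. Let T > 0 and let z, w : [0,1] × [0,T] → ℝ be continuously differentiable solutions of ∂t z = −q1 ∂x z + d1 w and ∂t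 w = q2 ∂x w + d2 z with z(0,t) = p w(0,t), and Y : [0,T] → ℝⁿ continuously differentiable with Ẏ(t) = A Y(t) + B w(0,t). Define α(x,t) = z(x,t) − ∫₀ˣ φ(x,y) z(y,t) dy − ∫₀ˣ ψ(x,y) w(y,t) dy − γ(x) Y(t) and β(x,t) = w(x,t) − ∫₀ˣ Ψ(x,y) z(y,t) dy − ∫₀ˣ Φ(x,y) w(y,t) dy − λ(x) Y(t). Then for all (x,t) ∈ [0,1] × [0,T]: ∂t α(x,t) = −q1 ∂x α(x,t), ∂t β(x,t) = q2 ∂x β(x,t), α(0,t) = p β(0,t), and β(0,t) = w(0,t) − Kᵀ Y(t). -/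
open Set MeasureTheory
open scoped Matrix

lemma extend_cont {X : Type*} [TopologicalSpace X] [NormalSpace X] {s : Set X}
    (hs : IsClosed s) {f : X → ℝ} (hf : ContinuousOn f s) :
    ∃ g : X → ℝ, Continuous g ∧ ∀ q ∈ s, g q = f q := by
  obtain ⟨g, hg⟩ := ContinuousMap.exists_restrict_eq (Y := ℝ) hs ⟨s.restrict f, hf.restrict⟩
  exact ⟨g, g.continuous, fun q hq => congrFun (congrArg ContinuousMap.toFun hg) ⟨q, hq⟩⟩

lemma ftc_rep {f f' : ℝ → ℝ} {a b : ℝ} (hab : a ≤ b) {c : ℝ}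
    (hcont : ContinuousOn f (Icc a c)) (hbc : b ≤ c)
    (hderiv : ∀ y ∈ Icc a c, HasDerivWithinAt f (f' y) (Icc a c) y)
    (hf'c : ContinuousOn f' (Icc a c)) :
    f b = f a + ∫ y in a..b, f' y := by
  have hsub : Icc a b ⊆ Icc a c := Icc_subset_Icc le_rfl hbc
  have h := intervalIntegral.integral_eq_sub_of_hasDeriv_right_of_le hab
    (hcont.mono hsub)
    (fun y hy => (hderiv y ⟨hy.1.le, hy.2.le.trans hbc⟩).mono_of_mem_nhdsWithin
      (Icc_mem_nhdsGT_of_mem ⟨le_of_lt hy.1, hy.2.trans_le hbc⟩))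
    ((hf'c.mono hsub).intervalIntegrable_of_Icc hab)
  linarith [h]

lemma swap_rect {f : ℝ → ℝ → ℝ} (hf : Continuous fun q : ℝ × ℝ => f q.1 q.2)
    {x t : ℝ} (hx : 0 ≤ x) (ht : 0 ≤ t) :
    (∫ y in (0:ℝ)..x, ∫ s in (0:ℝ)..t, f y s) = ∫ s in (0:ℝ)..t, ∫ y in (0:ℝ)..x, f y s := by
  rw [intervalIntegral.integral_of_le hx, intervalIntegral.integral_of_le ht]
  simp_rw [intervalIntegral.integral_of_le ht, intervalIntegral.integral_of_le hx]
  apply MeasureTheory.integral_integral_swap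
  rw [Measure.prod_restrict, ← Measure.volume_eq_prod]
  exact ((hf.continuousOn.integrableOn_compact
    (isCompact_Icc (a := ((0:ℝ),(0:ℝ))) (b := (x,t)))).mono_set
    (by rw [← Icc_prod_Icc]; exact Set.prod_mono Ioc_subset_Icc_self Ioc_subset_Icc_self))

/-- FTC-1 for a globally continuous function, within-version. -/
lemma hasDerivAt_primitive {S : ℝ → ℝ} (hS : Continuous S) (t : ℝ) :
    HasDerivAt (fun u => ∫ s in (0:ℝ)..u, S s) (S t) t :=
  intervalIntegral.integral_hasDerivAt_right (hS.intervalIntegrable _ _)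
    (hS.stronglyMeasurableAtFilter _ _) hS.continuousAt

/-- Differentiation in the parameter `t` of `∫ y in 0..x, g y * u y t`. -/
lemma Dt_lemma {T x : ℝ} (hT : 0 ≤ T) (hx0 : 0 ≤ x) (hx1 : x ≤ 1)
    {g : ℝ → ℝ} (hg : ContinuousOn g (Icc 0 x))
    {u ut : ℝ → ℝ → ℝ}
    (hu : ContinuousOn (fun q : ℝ × ℝ => u q.1 q.2) (Icc 0 1 ×ˢ Icc 0 T))
    (hut : ContinuousOn (fun q : ℝ × ℝ => ut q.1 q.2) (Icc 0 1 ×ˢ Icc 0 T))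
    (hderiv : ∀ y ∈ Icc (0:ℝ) 1, ∀ t ∈ Icc (0:ℝ) T,
      HasDerivWithinAt (fun t' => u y t') (ut y t) (Icc 0 T) t)
    {t : ℝ} (ht : t ∈ Icc (0:ℝ) T) :
    HasDerivWithinAt (fun t' => ∫ y in (0:ℝ)..x, g y * u y t')
      (∫ y in (0:ℝ)..x, g y * ut y t) (Icc 0 T) t := by
  -- extensions
  obtain ⟨G, hGc, hGeq⟩ := extend_cont isClosed_Icc hg
  obtain ⟨U, hUc, hUeq⟩ := extend_cont (isClosed_Icc.prod isClosed_Icc) hut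
  -- the candidate derivative function
  set S : ℝ → ℝ := fun s => ∫ y in (0:ℝ)..x, G y * U (y, s) with hSdef
  have hSc : Continuous S := by
    apply intervalIntegral.continuous_parametric_intervalIntegral_of_continuous'
    exact (hGc.comp continuous_snd).mul (hUc.comp (continuous_snd.prodMk continuous_fst))
  -- key identity on [0,T]
  have key : ∀ t' ∈ Icc (0:ℝ) T,
      (∫ y in (0:ℝ)..x, g y * u y t')
        = (∫ y in (0:ℝ)..x, g y * u y 0) + ∫ s in (0:ℝ)..t', S s := by
    intro t' ht'
    have h1 : ∀ y ∈ Icc (0:ℝ) x, g y * u y t'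
        = g y * u y 0 + ∫ s in (0:ℝ)..t', G y * U (y, s) := by
      intro y hy
      have hy1 : y ∈ Icc (0:ℝ) 1 := ⟨hy.1, hy.2.trans hx1⟩
      have hmap : ∀ s ∈ Icc (0:ℝ) T, ((fun s : ℝ => (y, s)) s) ∈ Icc 0 1 ×ˢ Icc 0 T :=
        fun s hs => Set.mk_mem_prod hy1 hs
      have hcu : ContinuousOn (fun s => u y s) (Icc 0 T) :=
        hu.comp ((continuous_const.prodMk continuous_id).continuousOn) hmap
      have hcut : ContinuousOn (fun s => ut y s) (Icc 0 T) :=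
        hut.comp ((continuous_const.prodMk continuous_id).continuousOn) hmap
      have hrep : u y t' = u y 0 + ∫ s in (0:ℝ)..t', ut y s :=
        ftc_rep ht'.1 hcu ht'.2 (fun s hs => hderiv y hy1 s hs) hcut
      have hcong : (∫ s in (0:ℝ)..t', ut y s) = ∫ s in (0:ℝ)..t', U (y, s) := by
        apply intervalIntegral.integral_congr
        intro s hs
        rw [uIcc_of_le ht'.1] at hs
        have hsT : s ∈ Icc (0:ℝ) T := ⟨hs.1, hs.2.trans ht'.2⟩
        exact (hUeq (y, s) (Set.mk_mem_prod hy1 hsT)).symm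
      rw [hrep, hcong, mul_add, intervalIntegral.integral_const_mul, hGeq y hy]
    calc (∫ y in (0:ℝ)..x, g y * u y t')
        = ∫ y in (0:ℝ)..x, (g y * u y 0 + ∫ s in (0:ℝ)..t', G y * U (y, s)) := by
          apply intervalIntegral.integral_congr
          intro y hy; rw [uIcc_of_le hx0] at hy; exact h1 y hy
      _ = (∫ y in (0:ℝ)..x, g y * u y 0)
            + ∫ y in (0:ℝ)..x, ∫ s in (0:ℝ)..t', G y * U (y, s) := by
          apply intervalIntegral.integral_add
          · apply ContinuousOn.intervalIntegrable
            rw [uIcc_of_le hx0]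
            exact hg.mul (hu.comp ((continuous_id.prodMk continuous_const).continuousOn)
              (fun y hy => Set.mk_mem_prod ⟨hy.1, hy.2.trans hx1⟩ ⟨le_rfl, hT⟩))
          · apply ContinuousOn.intervalIntegrable
            apply Continuous.continuousOn
            apply intervalIntegral.continuous_parametric_intervalIntegral_of_continuous'
            exact (hGc.comp continuous_fst).mul (hUc.comp (continuous_fst.prodMk continuous_snd))
      _ = (∫ y in (0:ℝ)..x, g y * u y 0) + ∫ s in (0:ℝ)..t', S s := by
          congr 1
          exact swap_rect ((hGc.comp continuous_fst).mul hUc) hx0 ht'.1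
  -- conclude via FTC-1 for the primitive of S
  have hD : HasDerivWithinAt
      (fun t' => (∫ y in (0:ℝ)..x, g y * u y 0) + ∫ s in (0:ℝ)..t', S s)
      (S t) (Icc 0 T) t :=
    ((hasDerivAt_primitive hSc t).const_add _).hasDerivWithinAt
  have heq : S t = ∫ y in (0:ℝ)..x, g y * ut y t := by
    apply intervalIntegral.integral_congr
    intro y hy
    rw [uIcc_of_le hx0] at hy
    show G y * U (y, t) = g y * ut y t
    rw [hGeq y hy, hUeq (y, t) (Set.mk_mem_prod ⟨hy.1, hy.2.trans hx1⟩ ht)]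
  rw [← heq]
  exact hD.congr (fun t' ht' => key t' ht') (key t ht)

lemma swap_tri {k : ℝ → ℝ → ℝ} (hk : Continuous fun q : ℝ × ℝ => k q.1 q.2) {x : ℝ}
    (hx : 0 ≤ x) :
    (∫ y in (0:ℝ)..x, ∫ s in y..x, k s y) = ∫ s in (0:ℝ)..x, ∫ y in (0:ℝ)..s, k s y := by
  have hE : MeasurableSet {p : ℝ × ℝ | p.1 < p.2} :=
    measurableSet_lt measurable_fst measurable_snd
  have hg : Continuous (fun p : ℝ × ℝ => k p.2 p.1) :=
    hk.comp (continuous_snd.prodMk continuous_fst)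
  set g : ℝ × ℝ → ℝ := fun p => k p.2 p.1 with hgdef
  have hint : Integrable (Function.uncurry fun y s =>
      ({p : ℝ × ℝ | p.1 < p.2}.indicator g) (y, s))
      ((volume.restrict (Ioc 0 x)).prod (volume.restrict (Ioc 0 x))) := by
    rw [Measure.prod_restrict, ← Measure.volume_eq_prod]
    have : Function.uncurry (fun y s => ({p : ℝ × ℝ | p.1 < p.2}.indicator g) (y, s))
        = {p : ℝ × ℝ | p.1 < p.2}.indicator g := rfl
    rw [this]
    apply Integrable.indicator _ hE
    exact ((hg.continuousOn.integrableOn_compact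
      (isCompact_Icc (a := ((0:ℝ),(0:ℝ))) (b := (x,x)))).mono_set
      (by rw [← Icc_prod_Icc]; exact Set.prod_mono Ioc_subset_Icc_self Ioc_subset_Icc_self))
  rw [intervalIntegral.integral_of_le hx, intervalIntegral.integral_of_le hx]
  calc (∫ y in Ioc (0:ℝ) x, ∫ s in y..x, k s y)
      = ∫ y in Ioc (0:ℝ) x, ∫ s in Ioc (0:ℝ) x,
          ({p : ℝ × ℝ | p.1 < p.2}.indicator g) (y, s) := by
        apply setIntegral_congr_fun measurableSet_Ioc
        intro y hy
        show (∫ s in y..x, k s y)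
            = ∫ s in Ioc (0:ℝ) x, ({p : ℝ × ℝ | p.1 < p.2}.indicator g) (y, s)
        have : (∫ s in Ioc (0:ℝ) x, ({p : ℝ × ℝ | p.1 < p.2}.indicator g) (y, s))
            = ∫ s in Ioc (0:ℝ) x, (Ioi y).indicator (fun s => k s y) s := by
          apply setIntegral_congr_fun measurableSet_Ioc
          intro s _
          by_cases h : y < s <;> simp [Set.indicator, h, hgdef]
        rw [this, setIntegral_indicator measurableSet_Ioi]
        have : Ioc (0:ℝ) x ∩ Ioi y = Ioc y x := by
          ext s; simp only [mem_inter_iff, mem_Ioc, mem_Ioi]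
          constructor
          · rintro ⟨⟨_, h2⟩, h3⟩; exact ⟨h3, h2⟩
          · rintro ⟨h1, h2⟩; exact ⟨⟨hy.1.trans h1, h2⟩, h1⟩
        rw [this, intervalIntegral.integral_of_le hy.2]
    _ = ∫ s in Ioc (0:ℝ) x, ∫ y in Ioc (0:ℝ) x,
          ({p : ℝ × ℝ | p.1 < p.2}.indicator g) (y, s) :=
        MeasureTheory.integral_integral_swap hint
    _ = ∫ s in Ioc (0:ℝ) x, ∫ y in (0:ℝ)..s, k s y := by
        apply setIntegral_congr_fun measurableSet_Ioc
        intro s hs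
        show (∫ y in Ioc (0:ℝ) x, ({p : ℝ × ℝ | p.1 < p.2}.indicator g) (y, s))
            = ∫ y in (0:ℝ)..s, k s y
        have h1 : (∫ y in Ioc (0:ℝ) x, ({p : ℝ × ℝ | p.1 < p.2}.indicator g) (y, s))
            = ∫ y in Ioc (0:ℝ) x, (Iio s).indicator (fun y => k s y) y := by
          apply setIntegral_congr_fun measurableSet_Ioc
          intro y _
          by_cases h : y < s <;> simp [Set.indicator, h, hgdef]
        rw [h1, setIntegral_indicator measurableSet_Iio]
        have h2 : Ioc (0:ℝ) x ∩ Iio s = Ioo 0 s := by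
          ext y; simp only [mem_inter_iff, mem_Ioc, mem_Iio, mem_Ioo]
          constructor
          · rintro ⟨⟨a, _⟩, c⟩; exact ⟨a, c⟩
          · rintro ⟨a, b⟩; exact ⟨⟨a, (le_of_lt b).trans hs.2⟩, b⟩
        rw [h2, ← integral_Ioc_eq_integral_Ioo, intervalIntegral.integral_of_le hs.1.le]

lemma isClosed_tri : IsClosed {q : ℝ × ℝ | 0 ≤ q.2 ∧ q.2 ≤ q.1 ∧ q.1 ≤ 1} := by
  have : {q : ℝ × ℝ | 0 ≤ q.2 ∧ q.2 ≤ q.1 ∧ q.1 ≤ 1}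
      = {q : ℝ × ℝ | 0 ≤ q.2} ∩ ({q : ℝ × ℝ | q.2 ≤ q.1} ∩ {q : ℝ × ℝ | q.1 ≤ 1}) := by
    ext q; simp [mem_inter_iff, and_assoc]
  rw [this]
  exact (isClosed_le continuous_const continuous_snd).inter
    ((isClosed_le continuous_snd continuous_fst).inter
      (isClosed_le continuous_fst continuous_const))

/-- Differentiation in `x` of `x ↦ ∫ y in 0..x, F x y * h y` on the triangle. -/
lemma Dx_lemma {x : ℝ} (hx0 : 0 ≤ x) (hx1 : x ≤ 1) {F Fx : ℝ → ℝ → ℝ}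
    (hFc : ContinuousOn (fun q : ℝ × ℝ => F q.1 q.2) {q : ℝ × ℝ | 0 ≤ q.2 ∧ q.2 ≤ q.1 ∧ q.1 ≤ 1})
    (hFxc : ContinuousOn (fun q : ℝ × ℝ => Fx q.1 q.2) {q : ℝ × ℝ | 0 ≤ q.2 ∧ q.2 ≤ q.1 ∧ q.1 ≤ 1})
    (hFd : ∀ a b, 0 ≤ b → b ≤ a → a ≤ 1 → HasDerivWithinAt (fun s => F s b) (Fx a b) (Icc b 1) a)
    {h : ℝ → ℝ} (hh : ContinuousOn h (Icc 0 1)) :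
    HasDerivWithinAt (fun x' => ∫ y in (0:ℝ)..x', F x' y * h y)
      (F x x * h x + ∫ y in (0:ℝ)..x, Fx x y * h y) (Icc 0 1) x := by
  obtain ⟨Fb, hFbc, hFbeq⟩ := extend_cont isClosed_tri hFc
  obtain ⟨Fxb, hFxbc, hFxbeq⟩ := extend_cont isClosed_tri hFxc
  obtain ⟨hb, hhbc, hhbeq⟩ := extend_cont isClosed_Icc hh
  set k : ℝ → ℝ → ℝ := fun s y => Fxb (s, y) * hb y with hkdef
  have hkc : Continuous fun q : ℝ × ℝ => k q.1 q.2 :=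
    (hFxbc.comp continuous_id).mul (hhbc.comp continuous_snd)
  set D : ℝ → ℝ := fun s => Fb (s, s) * hb s + ∫ y in (0:ℝ)..s, k s y with hDdef
  have hdiagFb : Continuous fun s : ℝ => Fb (s, s) :=
    hFbc.comp (continuous_id.prodMk continuous_id)
  have hprim : Continuous fun s => ∫ y in (0:ℝ)..s, k s y := by
    have := intervalIntegral.continuous_parametric_intervalIntegral_of_continuous
      (μ := volume) (f := k) (a₀ := (0:ℝ)) hkc (continuous_id : Continuous fun y : ℝ => y)
    exact this
  have hDc : Continuous D := (hdiagFb.mul hhbc).add hprim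
  -- key identity
  have key : ∀ x' ∈ Icc (0:ℝ) 1,
      (∫ y in (0:ℝ)..x', F x' y * h y) = ∫ s in (0:ℝ)..x', D s := by
    intro x' hx'
    -- pointwise FTC in the first argument
    have h1 : ∀ y ∈ Icc (0:ℝ) x', F x' y * h y
        = F y y * h y + (∫ s in y..x', k s y) := by
      intro y hy
      have hy1 : (0:ℝ) ≤ y := hy.1
      have hcF : ContinuousOn (fun s => F s y) (Icc y 1) := by
        apply hFc.comp ((continuous_id.prodMk continuous_const).continuousOn)
        intro s hs; exact ⟨hy1, hs.1, hs.2⟩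
      have hcFx : ContinuousOn (fun s => Fx s y) (Icc y 1) := by
        apply hFxc.comp ((continuous_id.prodMk continuous_const).continuousOn)
        intro s hs; exact ⟨hy1, hs.1, hs.2⟩
      have hrep : F x' y = F y y + ∫ s in y..x', Fx s y :=
        ftc_rep hy.2 hcF hx'.2 (fun s hs => hFd s y hy1 hs.1 hs.2) hcFx
      have hcong : (∫ s in y..x', Fx s y) * h y = ∫ s in y..x', k s y := by
        rw [← intervalIntegral.integral_mul_const]
        apply intervalIntegral.integral_congr
        intro s hs
        rw [uIcc_of_le hy.2] at hs
        rw [hkdef]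
        show Fx s y * h y = Fxb (s, y) * hb y
        rw [hFxbeq (s, y) ⟨hy1, hs.1, hs.2.trans hx'.2⟩,
          hhbeq y ⟨hy1, hy.2.trans hx'.2⟩]
      rw [hrep, add_mul, hcong]
    -- continuity of the pieces, for splitting the integral
    have hdiagc : ContinuousOn (fun y => F y y * h y) (Icc 0 x') := by
      apply ContinuousOn.mul
      · apply hFc.comp ((continuous_id.prodMk continuous_id).continuousOn)
        intro y hy; exact ⟨hy.1, le_rfl, hy.2.trans hx'.2⟩
      · exact hh.mono (Icc_subset_Icc le_rfl hx'.2)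
    have hPc : Continuous (fun y => ∫ s in y..x', k s y) := by
      have e1 : Continuous (fun y => ∫ s in (0:ℝ)..x', k s y) := by
        apply intervalIntegral.continuous_parametric_intervalIntegral_of_continuous'
        exact hkc.comp (continuous_snd.prodMk continuous_fst)
      have e2 : Continuous (fun y => ∫ s in (0:ℝ)..y, k s y) := by
        have := intervalIntegral.continuous_parametric_intervalIntegral_of_continuous
          (μ := volume) (f := fun y s => k s y) (a₀ := (0:ℝ))
          (hkc.comp (continuous_snd.prodMk continuous_fst)) (continuous_id : Continuous fun y : ℝ => y)
        exact this
      have e3 : (fun y => ∫ s in y..x', k s y)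
          = fun y => (∫ s in (0:ℝ)..x', k s y) - ∫ s in (0:ℝ)..y, k s y := by
        funext y
        have hky : Continuous fun s => k s y :=
          hkc.comp ((continuous_id : Continuous fun y : ℝ => y).prodMk continuous_const)
        rw [← intervalIntegral.integral_interval_sub_left
          (hky.intervalIntegrable _ _) (hky.intervalIntegrable _ _)]
      rw [e3]; exact e1.sub e2
    calc (∫ y in (0:ℝ)..x', F x' y * h y)
        = ∫ y in (0:ℝ)..x', (F y y * h y + ∫ s in y..x', k s y) := by
          apply intervalIntegral.integral_congr
          intro y hy; rw [uIcc_of_le hx'.1] at hy; exact h1 y hy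
      _ = (∫ y in (0:ℝ)..x', F y y * h y) + ∫ y in (0:ℝ)..x', ∫ s in y..x', k s y := by
          apply intervalIntegral.integral_add
          · exact hdiagc.intervalIntegrable_of_Icc hx'.1
          · exact hPc.continuousOn.intervalIntegrable
      _ = (∫ y in (0:ℝ)..x', Fb (y, y) * hb y) + ∫ s in (0:ℝ)..x', ∫ y in (0:ℝ)..s, k s y := by
          congr 1
          · apply intervalIntegral.integral_congr
            intro y hy; rw [uIcc_of_le hx'.1] at hy
            show F y y * h y = Fb (y, y) * hb y
            rw [hFbeq (y, y) ⟨hy.1, le_rfl, hy.2.trans hx'.2⟩, hhbeq y ⟨hy.1, hy.2.trans hx'.2⟩]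
          · exact swap_tri hkc hx'.1
      _ = ∫ s in (0:ℝ)..x', D s := by
          rw [hDdef]
          exact (intervalIntegral.integral_add
            ((hdiagFb.mul hhbc).continuousOn.intervalIntegrable)
            (hprim.continuousOn.intervalIntegrable)).symm
  -- conclude
  have hD : HasDerivWithinAt (fun x' => ∫ s in (0:ℝ)..x', D s) (D x) (Icc 0 1) x :=
    (hasDerivAt_primitive hDc x).hasDerivWithinAt
  have heq : D x = F x x * h x + ∫ y in (0:ℝ)..x, Fx x y * h y := by
    rw [hDdef]
    show Fb (x, x) * hb x + (∫ y in (0:ℝ)..x, k x y) = _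
    rw [hFbeq (x, x) ⟨hx0, le_rfl, hx1⟩, hhbeq x ⟨hx0, hx1⟩]
    congr 1
    apply intervalIntegral.integral_congr
    intro y hy; rw [uIcc_of_le hx0] at hy
    show Fxb (x, y) * hb y = Fx x y * h y
    rw [hFxbeq (x, y) ⟨hy.1, hy.2, hx1⟩, hhbeq y ⟨hy.1, hy.2.trans hx1⟩]
  rw [← heq]
  exact hD.congr (fun x' hx' => key x' hx') (key x ⟨hx0, hx1⟩)

lemma dot_deriv {n : ℕ} (u : Fin n → ℝ) {Y : ℝ → Fin n → ℝ} {Y' : Fin n → ℝ} {t : ℝ}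
    (hY : HasDerivAt Y Y' t) : HasDerivAt (fun s => u ⬝ᵥ Y s) (u ⬝ᵥ Y') t := by
  let L : (Fin n → ℝ) →ₗ[ℝ] ℝ :=
    { toFun := fun v => u ⬝ᵥ v
      map_add' := fun a b => dotProduct_add u a b
      map_smul' := fun c a => dotProduct_smul c u a }
  exact (L.toContinuousLinearMap.hasFDerivAt).comp_hasDerivAt t hY

lemma exp_dot_deriv {n : ℕ} (A : Matrix (Fin n) (Fin n) ℝ) (K v : Fin n → ℝ) (c x : ℝ) :
    HasDerivAt (fun u : ℝ => Matrix.vecMul K (NormedSpace.exp ((c * u) • A)) ⬝ᵥ v)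
      (c * (Matrix.vecMul (Matrix.vecMul K (NormedSpace.exp ((c * x) • A))) A ⬝ᵥ v)) x := by
  letI : SeminormedRing (Matrix (Fin n) (Fin n) ℝ) := Matrix.linftyOpSemiNormedRing
  letI : NormedRing (Matrix (Fin n) (Fin n) ℝ) := Matrix.linftyOpNormedRing
  letI : NormedAlgebra ℝ (Matrix (Fin n) (Fin n) ℝ) := Matrix.linftyOpNormedAlgebra
  have h1 : HasDerivAt (fun u : ℝ => NormedSpace.exp (u • A))
      (NormedSpace.exp ((c * x) • A) * A) (c * x) := hasDerivAt_exp_smul_const A (c * x)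
  have h2 : HasDerivAt (fun u : ℝ => c * u) c x := by
    simpa using (hasDerivAt_id x).const_mul c
  have h3 : HasDerivAt (fun u : ℝ => NormedSpace.exp ((c * u) • A))
      (c • (NormedSpace.exp ((c * x) • A) * A)) x := HasDerivAt.scomp x h1 h2
  let L : Matrix (Fin n) (Fin n) ℝ →ₗ[ℝ] ℝ :=
    { toFun := fun M => K ⬝ᵥ (M *ᵥ v)
      map_add' := fun M N => by
        simp [Matrix.add_mulVec, dotProduct_add]
      map_smul' := fun r M => by
        simp [Matrix.smul_mulVec, dotProduct_smul] }
  have h4 := (L.toContinuousLinearMap.hasFDerivAt).comp_hasDerivAt x h3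
  have h5 : HasDerivAt (fun u : ℝ => K ⬝ᵥ (NormedSpace.exp ((c * u) • A) *ᵥ v))
      (K ⬝ᵥ ((c • (NormedSpace.exp ((c * x) • A) * A)) *ᵥ v)) x := h4
  simp_rw [Matrix.dotProduct_mulVec] at h5
  have heq : K ᵥ* ((c • (NormedSpace.exp ((c * x) • A) * A)))
      = c • (K ᵥ* NormedSpace.exp ((c * x) • A) ᵥ* A) := by
    rw [Matrix.vecMul_vecMul]
    ext j
    simp [Matrix.vecMul, dotProduct, Finset.mul_sum]
    ring_nf
    apply Finset.sum_congr rfl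
    intro i _
    ring
  rw [heq] at h5
  simpa [smul_dotProduct] using h5

lemma ibp {f g f' g' : ℝ → ℝ} {x : ℝ} (hx0 : 0 ≤ x)
    (hf : ∀ y ∈ Icc (0:ℝ) x, HasDerivWithinAt f (f' y) (Icc 0 x) y)
    (hg : ∀ y ∈ Icc (0:ℝ) x, HasDerivWithinAt g (g' y) (Icc 0 x) y)
    (hfc : ContinuousOn f (Icc 0 x)) (hgc : ContinuousOn g (Icc 0 x))
    (hf'c : ContinuousOn f' (Icc 0 x)) (hg'c : ContinuousOn g' (Icc 0 x)) :
    (∫ y in (0:ℝ)..x, f y * g' y)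
      = f x * g x - f 0 * g 0 - ∫ y in (0:ℝ)..x, f' y * g y := by
  have hrep : f x * g x = f 0 * g 0 + ∫ y in (0:ℝ)..x, (f' y * g y + f y * g' y) :=
    ftc_rep hx0 (hfc.mul hgc) le_rfl (fun y hy => (hf y hy).mul (hg y hy))
      ((hf'c.mul hgc).add (hfc.mul hg'c))
  rw [intervalIntegral.integral_add (f := fun y => f' y * g y) (g := fun y => f y * g' y) ((hf'c.mul hgc).intervalIntegrable_of_Icc hx0)
    ((hfc.mul hg'c).intervalIntegrable_of_Icc hx0)] at hrep
  linarith

/-- The second (PDE) backstepping transformation: with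
kernels `(φ, ψ, Ψ, Φ)` solving the kernel equations (A.1)–(A.10) on the
triangle and `λ(x) = Kᵀ e^{Ax/q2}`, `γ(x) = p Kᵀ e^{-Ax/q1}`, the maps
`α = z - ∫φz - ∫ψw - γY`, `β = w - ∫Ψz - ∫Φw - λY` transform the plant into
`α_t = -q1 α_x`, `β_t = q2 β_x`, `α(0,t) = p β(0,t)`,
`β(0,t) = w(0,t) - Kᵀ Y(t)`. -/
theorem second_backstepping_transformation
    (q1 q2 : ℝ) (hq1 : 0 < q1) (hq2 : 0 < q2) (d1 d2 : ℝ)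
    (p : ℝ) (hp : p ≠ 0)
    (n : ℕ) (hn : 0 < n)
    (A : Matrix (Fin n) (Fin n) ℝ) (B K : Fin n → ℝ)
    (lam gam : ℝ → Fin n → ℝ)
    (hlam : ∀ x : ℝ, lam x = Matrix.vecMul K (NormedSpace.exp ((x / q2) • A)))
    (hgam : ∀ x : ℝ, gam x =
      p • Matrix.vecMul K (NormedSpace.exp ((-(x / q1)) • A)))
    (T : ℝ) (hT : 0 < T)
    -- kernels φ, ψ, Ψ, Φ, continuously differentiable on the triangle 𝒟:
    (φ ψ Ψ Φ φx φy ψx ψy Ψx Ψy Φx Φy : ℝ → ℝ → ℝ)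
    (hφc : ContinuousOn (fun q : ℝ × ℝ => φ q.1 q.2)
      {q : ℝ × ℝ | 0 ≤ q.2 ∧ q.2 ≤ q.1 ∧ q.1 ≤ 1})
    (hψc : ContinuousOn (fun q : ℝ × ℝ => ψ q.1 q.2)
      {q : ℝ × ℝ | 0 ≤ q.2 ∧ q.2 ≤ q.1 ∧ q.1 ≤ 1})
    (hΨc : ContinuousOn (fun q : ℝ × ℝ => Ψ q.1 q.2)
      {q : ℝ × ℝ | 0 ≤ q.2 ∧ q.2 ≤ q.1 ∧ q.1 ≤ 1})
    (hΦc : ContinuousOn (fun q : ℝ × ℝ => Φ q.1 q.2)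
      {q : ℝ × ℝ | 0 ≤ q.2 ∧ q.2 ≤ q.1 ∧ q.1 ≤ 1})
    (hφx : ∀ x y, 0 ≤ y → y ≤ x → x ≤ 1 →
      HasDerivWithinAt (fun x' => φ x' y) (φx x y) (Icc y 1) x)
    (hφy : ∀ x y, 0 ≤ y → y ≤ x → x ≤ 1 →
      HasDerivWithinAt (fun y' => φ x y') (φy x y) (Icc 0 x) y)
    (hψx : ∀ x y, 0 ≤ y → y ≤ x → x ≤ 1 →
      HasDerivWithinAt (fun x' => ψ x' y) (ψx x y) (Icc y 1) x)
    (hψy : ∀ x y, 0 ≤ y → y ≤ x → x ≤ 1 →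
      HasDerivWithinAt (fun y' => ψ x y') (ψy x y) (Icc 0 x) y)
    (hΨx : ∀ x y, 0 ≤ y → y ≤ x → x ≤ 1 →
      HasDerivWithinAt (fun x' => Ψ x' y) (Ψx x y) (Icc y 1) x)
    (hΨy : ∀ x y, 0 ≤ y → y ≤ x → x ≤ 1 →
      HasDerivWithinAt (fun y' => Ψ x y') (Ψy x y) (Icc 0 x) y)
    (hΦx : ∀ x y, 0 ≤ y → y ≤ x → x ≤ 1 →
      HasDerivWithinAt (fun x' => Φ x' y) (Φx x y) (Icc y 1) x)
    (hΦy : ∀ x y, 0 ≤ y → y ≤ x → x ≤ 1 →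
      HasDerivWithinAt (fun y' => Φ x y') (Φy x y) (Icc 0 x) y)
    (hφxc : ContinuousOn (fun q : ℝ × ℝ => φx q.1 q.2)
      {q : ℝ × ℝ | 0 ≤ q.2 ∧ q.2 ≤ q.1 ∧ q.1 ≤ 1})
    (hφyc : ContinuousOn (fun q : ℝ × ℝ => φy q.1 q.2)
      {q : ℝ × ℝ | 0 ≤ q.2 ∧ q.2 ≤ q.1 ∧ q.1 ≤ 1})
    (hψxc : ContinuousOn (fun q : ℝ × ℝ => ψx q.1 q.2)
      {q : ℝ × ℝ | 0 ≤ q.2 ∧ q.2 ≤ q.1 ∧ q.1 ≤ 1})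
    (hψyc : ContinuousOn (fun q : ℝ × ℝ => ψy q.1 q.2)
      {q : ℝ × ℝ | 0 ≤ q.2 ∧ q.2 ≤ q.1 ∧ q.1 ≤ 1})
    (hΨxc : ContinuousOn (fun q : ℝ × ℝ => Ψx q.1 q.2)
      {q : ℝ × ℝ | 0 ≤ q.2 ∧ q.2 ≤ q.1 ∧ q.1 ≤ 1})
    (hΨyc : ContinuousOn (fun q : ℝ × ℝ => Ψy q.1 q.2)
      {q : ℝ × ℝ | 0 ≤ q.2 ∧ q.2 ≤ q.1 ∧ q.1 ≤ 1})
    (hΦxc : ContinuousOn (fun q : ℝ × ℝ => Φx q.1 q.2)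
      {q : ℝ × ℝ | 0 ≤ q.2 ∧ q.2 ≤ q.1 ∧ q.1 ≤ 1})
    (hΦyc : ContinuousOn (fun q : ℝ × ℝ => Φy q.1 q.2)
      {q : ℝ × ℝ | 0 ≤ q.2 ∧ q.2 ≤ q.1 ∧ q.1 ≤ 1})
    -- the kernel equations on 𝒟:
    (hψpde : ∀ x y, 0 ≤ y → y ≤ x → x ≤ 1 →
      q2 * ψy x y - q1 * ψx x y - d1 * φ x y = 0)
    (hφpde : ∀ x y, 0 ≤ y → y ≤ x → x ≤ 1 →
      q1 * φx x y + q1 * φy x y + d2 * ψ x y = 0)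
    (hΨpde : ∀ x y, 0 ≤ y → y ≤ x → x ≤ 1 →
      q2 * Ψx x y - q1 * Ψy x y - d2 * Φ x y = 0)
    (hΦpde : ∀ x y, 0 ≤ y → y ≤ x → x ≤ 1 →
      q2 * Φx x y + q2 * Φy x y - d1 * Ψ x y = 0)
    (hψbc : ∀ x ∈ Icc (0:ℝ) 1, ψ x x = d1 / (q1 + q2))
    (hφbc : ∀ x ∈ Icc (0:ℝ) 1, φ x 0 =
      (q2 / (q1 * p)) * ψ x 0 - (1 / (q1 * p)) * dotProduct (gam x) B)
    (hΨbc : ∀ x ∈ Icc (0:ℝ) 1, Ψ x x = -d2 / (q1 + q2))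
    (hΦbc : ∀ x ∈ Icc (0:ℝ) 1, Φ x 0 =
      (q1 * p / q2) * Ψ x 0 + (1 / q2) * dotProduct (lam x) B)
    -- the plant: z, w continuously differentiable solutions on [0,1] × [0,T]:
    (z w zx zt wx wt : ℝ → ℝ → ℝ)
    (hzc : ContinuousOn (fun q : ℝ × ℝ => z q.1 q.2) (Icc 0 1 ×ˢ Icc 0 T))
    (hwc : ContinuousOn (fun q : ℝ × ℝ => w q.1 q.2) (Icc 0 1 ×ˢ Icc 0 T))
    (hzx : ∀ x ∈ Icc (0:ℝ) 1, ∀ t ∈ Icc (0:ℝ) T,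
      HasDerivWithinAt (fun x' => z x' t) (zx x t) (Icc 0 1) x)
    (hzt : ∀ x ∈ Icc (0:ℝ) 1, ∀ t ∈ Icc (0:ℝ) T,
      HasDerivWithinAt (fun t' => z x t') (zt x t) (Icc 0 T) t)
    (hwx : ∀ x ∈ Icc (0:ℝ) 1, ∀ t ∈ Icc (0:ℝ) T,
      HasDerivWithinAt (fun x' => w x' t) (wx x t) (Icc 0 1) x)
    (hwt : ∀ x ∈ Icc (0:ℝ) 1, ∀ t ∈ Icc (0:ℝ) T,
      HasDerivWithinAt (fun t' => w x t') (wt x t) (Icc 0 T) t)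
    (hzxc : ContinuousOn (fun q : ℝ × ℝ => zx q.1 q.2) (Icc 0 1 ×ˢ Icc 0 T))
    (hztc : ContinuousOn (fun q : ℝ × ℝ => zt q.1 q.2) (Icc 0 1 ×ˢ Icc 0 T))
    (hwxc : ContinuousOn (fun q : ℝ × ℝ => wx q.1 q.2) (Icc 0 1 ×ˢ Icc 0 T))
    (hwtc : ContinuousOn (fun q : ℝ × ℝ => wt q.1 q.2) (Icc 0 1 ×ˢ Icc 0 T))
    (hzpde : ∀ x ∈ Icc (0:ℝ) 1, ∀ t ∈ Icc (0:ℝ) T,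
      zt x t = -q1 * zx x t + d1 * w x t)
    (hwpde : ∀ x ∈ Icc (0:ℝ) 1, ∀ t ∈ Icc (0:ℝ) T,
      wt x t = q2 * wx x t + d2 * z x t)
    (hzwbc : ∀ t ∈ Icc (0:ℝ) T, z 0 t = p * w 0 t)
    -- the distal ODE Ẏ = AY + B w(0,t):
    (Y : ℝ → Fin n → ℝ)
    (hY : ∀ t ∈ Icc (0:ℝ) T, HasDerivAt Y (A.mulVec (Y t) + w 0 t • B) t)
    -- the transformed states:
    (α β : ℝ → ℝ → ℝ)
    (hα : ∀ x t, α x t = z x t - (∫ y in (0:ℝ)..x, φ x y * z y t)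
      - (∫ y in (0:ℝ)..x, ψ x y * w y t) - dotProduct (gam x) (Y t))
    (hβ : ∀ x t, β x t = w x t - (∫ y in (0:ℝ)..x, Ψ x y * z y t)
      - (∫ y in (0:ℝ)..x, Φ x y * w y t) - dotProduct (lam x) (Y t)) :
    ∀ x ∈ Icc (0:ℝ) 1, ∀ t ∈ Icc (0:ℝ) T,
      (∃ e : ℝ, HasDerivWithinAt (fun x' => α x' t) e (Icc 0 1) x ∧
        HasDerivWithinAt (fun t' => α x t') (-q1 * e) (Icc 0 T) t) ∧
      (∃ e : ℝ, HasDerivWithinAt (fun x' => β x' t) e (Icc 0 1) x ∧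
        HasDerivWithinAt (fun t' => β x t') (q2 * e) (Icc 0 T) t) ∧
      α 0 t = p * β 0 t ∧
      β 0 t = w 0 t - dotProduct K (Y t) := by
  intro x hx t ht
  have hx0 : (0:ℝ) ≤ x := hx.1
  have hx1 : x ≤ 1 := hx.2
  have hT0 : (0:ℝ) ≤ T := hT.le
  -- continuity helpers
  have cker : ∀ F : ℝ → ℝ → ℝ, ContinuousOn (fun q : ℝ × ℝ => F q.1 q.2)
      {q : ℝ × ℝ | 0 ≤ q.2 ∧ q.2 ≤ q.1 ∧ q.1 ≤ 1} →
      ContinuousOn (fun y => F x y) (Icc 0 x) := fun F hF =>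
    hF.comp ((continuous_const.prodMk continuous_id).continuousOn)
      (fun y hy => ⟨hy.1, hy.2, hx1⟩)
  have cdat : ∀ u : ℝ → ℝ → ℝ, ContinuousOn (fun q : ℝ × ℝ => u q.1 q.2)
      (Icc 0 1 ×ˢ Icc 0 T) → ContinuousOn (fun y => u y t) (Icc 0 1) := fun u hu =>
    hu.comp ((continuous_id.prodMk continuous_const).continuousOn)
      (fun y hy => Set.mk_mem_prod hy ht)
  have sub01 : Icc (0:ℝ) x ⊆ Icc 0 1 := Icc_subset_Icc le_rfl hx1
  have cz := (cdat z hzc).mono sub01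
  have cw := (cdat w hwc).mono sub01
  have czx := (cdat zx hzxc).mono sub01
  have cwx := (cdat wx hwxc).mono sub01
  have cφ := cker φ hφc
  have cψ := cker ψ hψc
  have cΨ := cker Ψ hΨc
  have cΦ := cker Φ hΦc
  have cφx := cker φx hφxc
  have cφy := cker φy hφyc
  have cψx := cker ψx hψxc
  have cψy := cker ψy hψyc
  have cΨx := cker Ψx hΨxc
  have cΨy := cker Ψy hΨyc
  have cΦx := cker Φx hΦxc
  have cΦy := cker Φy hΦyc
  have hz0 : z 0 t = p * w 0 t := hzwbc t ht
  have hq1' : q1 * (1/q1) = 1 := mul_one_div_cancel hq1.ne'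
  have hq2' : q2 * (1/q2) = 1 := mul_one_div_cancel hq2.ne'
  have hq12 : q1 + q2 ≠ 0 := by positivity
  -- integration by parts, z with φ
  have hibpz : (∫ y in (0:ℝ)..x, φ x y * zx y t)
      = φ x x * z x t - φ x 0 * z 0 t - ∫ y in (0:ℝ)..x, φy x y * z y t :=
    ibp hx0 (fun y hy => hφy x y hy.1 hy.2 hx1)
      (fun y hy => (hzx y (sub01 hy) t ht).mono sub01) cφ cz cφy czx
  have hibpw : (∫ y in (0:ℝ)..x, ψ x y * wx y t)
      = ψ x x * w x t - ψ x 0 * w 0 t - ∫ y in (0:ℝ)..x, ψy x y * w y t :=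
    ibp hx0 (fun y hy => hψy x y hy.1 hy.2 hx1)
      (fun y hy => (hwx y (sub01 hy) t ht).mono sub01) cψ cw cψy cwx
  have hibpz2 : (∫ y in (0:ℝ)..x, Ψ x y * zx y t)
      = Ψ x x * z x t - Ψ x 0 * z 0 t - ∫ y in (0:ℝ)..x, Ψy x y * z y t :=
    ibp hx0 (fun y hy => hΨy x y hy.1 hy.2 hx1)
      (fun y hy => (hzx y (sub01 hy) t ht).mono sub01) cΨ cz cΨy czx
  have hibpw2 : (∫ y in (0:ℝ)..x, Φ x y * wx y t)
      = Φ x x * w x t - Φ x 0 * w 0 t - ∫ y in (0:ℝ)..x, Φy x y * w y t :=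
    ibp hx0 (fun y hy => hΦy x y hy.1 hy.2 hx1)
      (fun y hy => (hwx y (sub01 hy) t ht).mono sub01) cΦ cw cΦy cwx
  -- splitting the time-derivative integrals using the plant equations
  have hsplitz : ∀ F : ℝ → ℝ → ℝ, ContinuousOn (fun y => F x y) (Icc 0 x) →
      (∫ y in (0:ℝ)..x, F x y * zt y t)
        = -q1 * (∫ y in (0:ℝ)..x, F x y * zx y t)
          + d1 * (∫ y in (0:ℝ)..x, F x y * w y t) := by
    intro F cF
    rw [← intervalIntegral.integral_const_mul, ← intervalIntegral.integral_const_mul,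
      ← intervalIntegral.integral_add (f := fun y => -q1 * (F x y * zx y t)) (g := fun y => d1 * (F x y * w y t))
        ((continuousOn_const (c := -q1).mul ((cF).mul czx)).intervalIntegrable_of_Icc hx0)
        ((continuousOn_const (c := d1).mul ((cF).mul cw)).intervalIntegrable_of_Icc hx0)]
    apply intervalIntegral.integral_congr
    intro y hy
    rw [uIcc_of_le hx0] at hy
    have := hzpde y (sub01 hy) t ht
    show F x y * zt y t = -q1 * (F x y * zx y t) + d1 * (F x y * w y t)
    rw [this]; ring
  have hsplitw : ∀ F : ℝ → ℝ → ℝ, ContinuousOn (fun y => F x y) (Icc 0 x) →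
      (∫ y in (0:ℝ)..x, F x y * wt y t)
        = q2 * (∫ y in (0:ℝ)..x, F x y * wx y t)
          + d2 * (∫ y in (0:ℝ)..x, F x y * z y t) := by
    intro F cF
    rw [← intervalIntegral.integral_const_mul, ← intervalIntegral.integral_const_mul,
      ← intervalIntegral.integral_add (f := fun y => q2 * (F x y * wx y t)) (g := fun y => d2 * (F x y * z y t))
        ((continuousOn_const (c := q2).mul ((cF).mul cwx)).intervalIntegrable_of_Icc hx0)
        ((continuousOn_const (c := d2).mul ((cF).mul cz)).intervalIntegrable_of_Icc hx0)]
    apply intervalIntegral.integral_congr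
    intro y hy
    rw [uIcc_of_le hx0] at hy
    have := hwpde y (sub01 hy) t ht
    show F x y * wt y t = q2 * (F x y * wx y t) + d2 * (F x y * z y t)
    rw [this]; ring
  -- kernel PDE integral identities
  have hsum3 : ∀ (c1 c2 c3 : ℝ) (F1 F2 F3 u : ℝ → ℝ),
      ContinuousOn F1 (Icc 0 x) → ContinuousOn F2 (Icc 0 x) → ContinuousOn F3 (Icc 0 x) →
      ContinuousOn u (Icc 0 x) →
      (∀ y ∈ Icc (0:ℝ) x, c1 * F1 y + c2 * F2 y + c3 * F3 y = 0) →
      c1 * (∫ y in (0:ℝ)..x, F1 y * u y) + c2 * (∫ y in (0:ℝ)..x, F2 y * u y)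
        + c3 * (∫ y in (0:ℝ)..x, F3 y * u y) = 0 := by
    intro c1 c2 c3 F1 F2 F3 u cF1 cF2 cF3 cu hpde
    rw [← intervalIntegral.integral_const_mul, ← intervalIntegral.integral_const_mul,
      ← intervalIntegral.integral_const_mul,
      ← intervalIntegral.integral_add (f := fun y => c1 * (F1 y * u y)) (g := fun y => c2 * (F2 y * u y))
        ((continuousOn_const (c := c1).mul ((cF1).mul cu)).intervalIntegrable_of_Icc hx0)
        ((continuousOn_const (c := c2).mul ((cF2).mul cu)).intervalIntegrable_of_Icc hx0),
      ← intervalIntegral.integral_add (f := fun y => c1 * (F1 y * u y) + c2 * (F2 y * u y)) (g := fun y => c3 * (F3 y * u y))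
        (((continuousOn_const (c := c1).mul ((cF1).mul cu)).add
          (continuousOn_const (c := c2).mul ((cF2).mul cu))).intervalIntegrable_of_Icc hx0)
        ((continuousOn_const (c := c3).mul ((cF3).mul cu)).intervalIntegrable_of_Icc hx0)]
    have : ∀ y ∈ uIcc (0:ℝ) x,
        c1 * (F1 y * u y) + c2 * (F2 y * u y) + c3 * (F3 y * u y) = (fun _ => (0:ℝ)) y := by
      intro y hy
      rw [uIcc_of_le hx0] at hy
      have := hpde y hy
      show c1 * (F1 y * u y) + c2 * (F2 y * u y) + c3 * (F3 y * u y) = 0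
      linear_combination u y * this
    rw [intervalIntegral.integral_congr this, intervalIntegral.integral_zero]
  have hK1 : q1 * (∫ y in (0:ℝ)..x, φx x y * z y t)
      + q1 * (∫ y in (0:ℝ)..x, φy x y * z y t)
      + d2 * (∫ y in (0:ℝ)..x, ψ x y * z y t) = 0 :=
    hsum3 q1 q1 d2 _ _ _ _ cφx cφy cψ cz
      (fun y hy => hφpde x y hy.1 hy.2 hx1)
  have hK2 : q2 * (∫ y in (0:ℝ)..x, ψy x y * w y t)
      + (-q1) * (∫ y in (0:ℝ)..x, ψx x y * w y t)
      + (-d1) * (∫ y in (0:ℝ)..x, φ x y * w y t) = 0 :=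
    hsum3 q2 (-q1) (-d1) _ _ _ _ cψy cψx cφ cw
      (fun y hy => by linear_combination hψpde x y hy.1 hy.2 hx1)
  have hK1b : q2 * (∫ y in (0:ℝ)..x, Ψx x y * z y t)
      + (-q1) * (∫ y in (0:ℝ)..x, Ψy x y * z y t)
      + (-d2) * (∫ y in (0:ℝ)..x, Φ x y * z y t) = 0 :=
    hsum3 q2 (-q1) (-d2) _ _ _ _ cΨx cΨy cΦ cz
      (fun y hy => by linear_combination hΨpde x y hy.1 hy.2 hx1)
  have hK2b : q2 * (∫ y in (0:ℝ)..x, Φx x y * w y t)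
      + q2 * (∫ y in (0:ℝ)..x, Φy x y * w y t)
      + (-d1) * (∫ y in (0:ℝ)..x, Ψ x y * w y t) = 0 :=
    hsum3 q2 q2 (-d1) _ _ _ _ cΦx cΦy cΨ cw
      (fun y hy => by linear_combination hΦpde x y hy.1 hy.2 hx1)
  -- boundary conditions in multiplied-out form
  have hbc1 : (q1 + q2) * ψ x x = d1 := by
    rw [hψbc x ⟨hx0, hx1⟩]; field_simp; try ring
  have hbc1b : (q1 + q2) * Ψ x x = -d2 := by
    rw [hΨbc x ⟨hx0, hx1⟩]; field_simp; try ring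
  have hbc2 : q1 * (p * φ x 0) = q2 * ψ x 0 - dotProduct (gam x) B := by
    rw [hφbc x ⟨hx0, hx1⟩]; field_simp; try ring
  have hbc2b : q2 * Φ x 0 = q1 * p * Ψ x 0 + dotProduct (lam x) B := by
    rw [hΦbc x ⟨hx0, hx1⟩]; field_simp; try ring
  -- x-derivatives of the ODE terms
  have hgamd : HasDerivAt (fun x' => dotProduct (gam x') (Y t))
      ((-(1/q1)) * dotProduct (Matrix.vecMul (gam x) A) (Y t)) x := by
    have hgfun : (fun x' => dotProduct (gam x') (Y t))
        = fun x' => p * dotProduct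
            (Matrix.vecMul K (NormedSpace.exp (((-(1/q1)) * x') • A))) (Y t) := by
      funext x'
      rw [hgam x', show -(x'/q1) = (-(1/q1)) * x' by ring, smul_dotProduct, smul_eq_mul]
    rw [hgfun]
    have h0 := (exp_dot_deriv A K (Y t) (-(1/q1)) x).const_mul p
    have hv : (-(1/q1)) * dotProduct (Matrix.vecMul (gam x) A) (Y t)
        = p * (-(1/q1) * dotProduct (Matrix.vecMul (Matrix.vecMul K
          (NormedSpace.exp ((-(1/q1) * x) • A))) A) (Y t)) := by
     rw [hgam x, show -(x/q1) = (-(1/q1)) * x by ring, Matrix.smul_vecMul,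
      smul_dotProduct, smul_eq_mul]
     ring
    rw [hv]; exact h0
  have hlamd : HasDerivAt (fun x' => dotProduct (lam x') (Y t))
      ((1/q2) * dotProduct (Matrix.vecMul (lam x) A) (Y t)) x := by
    have hlfun : (fun x' => dotProduct (lam x') (Y t))
        = fun x' => dotProduct
            (Matrix.vecMul K (NormedSpace.exp (((1/q2) * x') • A))) (Y t) := by
      funext x'
      rw [hlam x', show x'/q2 = (1/q2) * x' by ring]
    rw [hlfun]
    have h0 := exp_dot_deriv A K (Y t) (1/q2) x
    convert h0 using 2
    rw [hlam x, show x/q2 = (1/q2) * x by ring]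
  -- t-derivatives of the ODE terms
  have hYt := hY t ht
  have hgamt : HasDerivAt (fun t' => dotProduct (gam x) (Y t'))
      (dotProduct (gam x) (A.mulVec (Y t) + w 0 t • B)) t := dot_deriv (gam x) hYt
  have hlamt : HasDerivAt (fun t' => dotProduct (lam x) (Y t'))
      (dotProduct (lam x) (A.mulVec (Y t) + w 0 t • B)) t := dot_deriv (lam x) hYt
  have hdotexp : ∀ u : Fin n → ℝ, dotProduct u (A.mulVec (Y t) + w 0 t • B)
      = dotProduct (Matrix.vecMul u A) (Y t) + w 0 t * dotProduct u B := by
    intro u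
    rw [dotProduct_add, Matrix.dotProduct_mulVec, dotProduct_smul, smul_eq_mul]
  -- x- and t-derivatives of the integral terms
  have hDxφ := Dx_lemma hx0 hx1 hφc hφxc (fun a b h1 h2 h3 => hφx a b h1 h2 h3) (cdat z hzc)
  have hDxψ := Dx_lemma hx0 hx1 hψc hψxc (fun a b h1 h2 h3 => hψx a b h1 h2 h3) (cdat w hwc)
  have hDxΨ := Dx_lemma hx0 hx1 hΨc hΨxc (fun a b h1 h2 h3 => hΨx a b h1 h2 h3) (cdat z hzc)
  have hDxΦ := Dx_lemma hx0 hx1 hΦc hΦxc (fun a b h1 h2 h3 => hΦx a b h1 h2 h3) (cdat w hwc)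
  have hDtφ := Dt_lemma hT0 hx0 hx1 cφ hzc hztc (fun y hy t' ht' => hzt y hy t' ht') ht
  have hDtψ := Dt_lemma hT0 hx0 hx1 cψ hwc hwtc (fun y hy t' ht' => hwt y hy t' ht') ht
  have hDtΨ := Dt_lemma hT0 hx0 hx1 cΨ hzc hztc (fun y hy t' ht' => hzt y hy t' ht') ht
  have hDtΦ := Dt_lemma hT0 hx0 hx1 cΦ hwc hwtc (fun y hy t' ht' => hwt y hy t' ht') ht
  -- boundary values of gam, lam
  have hgam0 : gam 0 = p • K := by
    rw [hgam 0, show -((0:ℝ)/q1) = (0:ℝ) by norm_num, zero_smul, NormedSpace.exp_zero,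
      Matrix.vecMul_one]
  have hlam0 : lam 0 = K := by
    rw [hlam 0, show ((0:ℝ)/q2) = (0:ℝ) by norm_num, zero_smul, NormedSpace.exp_zero,
      Matrix.vecMul_one]
  have hβ0 : β 0 t = w 0 t - dotProduct K (Y t) := by
    rw [hβ 0 t, intervalIntegral.integral_same, intervalIntegral.integral_same, hlam0]
    ring
  have hα0 : α 0 t = p * β 0 t := by
    rw [hα 0 t, hβ0, intervalIntegral.integral_same, intervalIntegral.integral_same,
      hgam0, hz0, smul_dotProduct, smul_eq_mul]
    ring
  constructor
  · -- the α transport equation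
    refine ⟨zx x t - (φ x x * z x t + ∫ y in (0:ℝ)..x, φx x y * z y t)
      - (ψ x x * w x t + ∫ y in (0:ℝ)..x, ψx x y * w y t)
      - ((-(1/q1)) * dotProduct (Matrix.vecMul (gam x) A) (Y t)), ?_, ?_⟩
    · exact ((((hzx x hx t ht).sub hDxφ).sub hDxψ).sub
        hgamd.hasDerivWithinAt).congr (fun y _ => hα y t) (hα x t)
    · have h2 := ((((hzt x hx t ht).sub hDtφ).sub hDtψ).sub
        hgamt.hasDerivWithinAt).congr (fun s _ => hα x s) (hα x t)
      have hval : zt x t - (∫ y in (0:ℝ)..x, φ x y * zt y t)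
          - (∫ y in (0:ℝ)..x, ψ x y * wt y t)
          - dotProduct (gam x) (A.mulVec (Y t) + w 0 t • B)
          = -q1 * (zx x t - (φ x x * z x t + ∫ y in (0:ℝ)..x, φx x y * z y t)
            - (ψ x x * w x t + ∫ y in (0:ℝ)..x, ψx x y * w y t)
            - ((-(1/q1)) * dotProduct (Matrix.vecMul (gam x) A) (Y t))) := by
        rw [hsplitz φ cφ, hsplitw ψ cψ, hibpz, hibpw, hdotexp (gam x),
          hzpde x hx t ht, hz0]
        linear_combination (-(w x t)) * hbc1 - (w 0 t) * hbc2 - hK1 + hK2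
          + dotProduct (Matrix.vecMul (gam x) A) (Y t) * hq1'
      exact hval ▸ h2
  constructor
  · -- the β transport equation
    refine ⟨wx x t - (Ψ x x * z x t + ∫ y in (0:ℝ)..x, Ψx x y * z y t)
      - (Φ x x * w x t + ∫ y in (0:ℝ)..x, Φx x y * w y t)
      - ((1/q2) * dotProduct (Matrix.vecMul (lam x) A) (Y t)), ?_, ?_⟩
    · exact ((((hwx x hx t ht).sub hDxΨ).sub hDxΦ).sub
        hlamd.hasDerivWithinAt).congr (fun y _ => hβ y t) (hβ x t)
    · have h2 := ((((hwt x hx t ht).sub hDtΨ).sub hDtΦ).sub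
        hlamt.hasDerivWithinAt).congr (fun s _ => hβ x s) (hβ x t)
      have hval : wt x t - (∫ y in (0:ℝ)..x, Ψ x y * zt y t)
          - (∫ y in (0:ℝ)..x, Φ x y * wt y t)
          - dotProduct (lam x) (A.mulVec (Y t) + w 0 t • B)
          = q2 * (wx x t - (Ψ x x * z x t + ∫ y in (0:ℝ)..x, Ψx x y * z y t)
            - (Φ x x * w x t + ∫ y in (0:ℝ)..x, Φx x y * w y t)
            - ((1/q2) * dotProduct (Matrix.vecMul (lam x) A) (Y t))) := by
        rw [hsplitz Ψ cΨ, hsplitw Φ cΦ, hibpz2, hibpw2, hdotexp (lam x),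
          hwpde x hx t ht, hz0]
        linear_combination (z x t) * hbc1b + (w 0 t) * hbc2b + hK1b + hK2b
          + dotProduct (Matrix.vecMul (lam x) A) (Y t) * hq2'
      exact hval ▸ h2
  exact ⟨hα0, hβ0⟩
end

section
/- Let q1, q2 > 0 and d1, d2, p ∈ ℝ. Let F, H : 𝒟 → ℝ be continuously differentiable on the triangle 𝒟 = {(x,y) : 0 ≤ y ≤ x ≤ 1} and satisfy q2 ∂x F(x,y) − q1 ∂y F(x,y) = d2 H(x,y) and q2 ∂x H(x,y) + q2 ∂y H(x,y) = d1 F(x,y) on 𝒟, together with F(x,x) = −d2/(q1+q2) and H(x,0) = (q1 p / q2) F(x,0) for x ∈ [0,1]. Let ℓ : [0,1] → ℝ be continuously differentiable and set L(x,y) = ℓ(x − y). Define, on 𝒟, Ψ(x,y) = F(x,y) + ∫_y^x L(x,r) F(r,y) dr and Φ(x,y) = H(x,y) − L(x,y) + ∫_y^x L(x,r) H(r,y) dr. Then on 𝒟: q2 ∂x Ψ − q1 ∂y Ψ = d2 Φ and q2 ∂x Φ + q2 ∂y Φ = d1 Ψ, and moreover Ψ(x,x) = −d2/(q1+q2) and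 Φ(x,0) = (q1 p / q2) Ψ(x,0) − ℓ(x) for all x ∈ [0,1]. -/
open Set

open Set MeasureTheory Function intervalIntegral

/-- FTC-1 for continuous integrands. -/
lemma ftc_cont {f : ℝ → ℝ} (hf : Continuous f) (a x : ℝ) :
    HasDerivAt (fun t => ∫ σ in a..t, f σ) (f x) x :=
  integral_hasDerivAt_right (hf.intervalIntegrable a x)
    (hf.stronglyMeasurableAtFilter _ _) hf.continuousAt

/-- Triangle Fubini, core version. -/
lemma fubini_triangle {a b : ℝ} (hab : a ≤ b) {φ : ℝ → ℝ → ℝ}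
    (hφ : Continuous (uncurry φ)) :
    (∫ s in a..b, (∫ r in a..s, φ s r)) = ∫ r in a..b, (∫ s in r..b, φ s r) := by
  set M : Set (ℝ × ℝ) := {p : ℝ × ℝ | p.2 ≤ p.1} with hM
  have hMmeas : MeasurableSet M := isClosed_le continuous_snd continuous_fst |>.measurableSet
  set ψ : ℝ → ℝ → ℝ := fun s r => M.indicator (uncurry φ) (s, r) with hψ
  set μ : Measure ℝ := volume.restrict (Ioc a b) with hμ
  have hψcont : ∀ s, Continuous (φ s) := fun s => hφ.comp (Continuous.prodMk_right s)
  have hψcont' : ∀ r, Continuous (fun s => φ s r) := fun r =>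
    hφ.comp (continuous_id.prodMk continuous_const)
  have hint : Integrable (uncurry ψ) (μ.prod μ) := by
    have h1 : IntegrableOn (uncurry φ) (Ioc a b ×ˢ Ioc a b) (volume.prod volume) :=
      (hφ.continuousOn.integrableOn_compact (isCompact_Icc.prod isCompact_Icc)).mono_set
        (prod_mono Ioc_subset_Icc_self Ioc_subset_Icc_self)
    have : Integrable (M.indicator (uncurry φ))
        ((volume.prod volume).restrict (Ioc a b ×ˢ Ioc a b)) := h1.indicator hMmeas
    rw [hμ, Measure.prod_restrict]
    exact this
  have swap := MeasureTheory.integral_integral_swap hint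
  -- identify LHS
  have hL : (∫ s in a..b, (∫ r in a..s, φ s r)) = ∫ s, (∫ r, ψ s r ∂μ) ∂μ := by
    rw [intervalIntegral.integral_of_le hab]
    refine setIntegral_congr_fun measurableSet_Ioc (fun s hs => ?_)
    have hsb : s ≤ b := hs.2
    have has : a ≤ s := hs.1.le
    have hii : ∀ u v : ℝ, IntervalIntegrable (fun r => ψ s r) volume u v := by
      intro u v
      have : (fun r => ψ s r) = (Iic s).indicator (φ s) := by
        funext r
        by_cases h : r ≤ s
        · simp [hψ, hM, Set.indicator_of_mem, h, uncurry]
        · simp [hψ, hM, Set.indicator_of_notMem, h, uncurry]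
      rw [this, intervalIntegrable_iff]
      exact ((hψcont s).integrableOn_uIoc).indicator measurableSet_Iic
    have hsplit : (∫ r, ψ s r ∂μ) = (∫ r in a..s, ψ s r) + ∫ r in s..b, ψ s r := by
      rw [integral_add_adjacent_intervals (hii a s) (hii s b),
        intervalIntegral.integral_of_le hab]
    rw [hsplit]
    have h2 : (∫ r in s..b, ψ s r) = 0 := by
      rw [intervalIntegral.integral_of_le hsb, integral_Ioc_eq_integral_Ioo]
      rw [setIntegral_congr_fun measurableSet_Ioo
        (fun r hr => indicator_of_notMem (by simp [hM]; exact hr.1) _)]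
      simp
    have h1 : (∫ r in a..s, ψ s r) = ∫ r in a..s, φ s r :=
      intervalIntegral.integral_congr (fun r hr => by
        rw [uIcc_of_le has] at hr
        exact indicator_of_mem (by simp [hM]; exact hr.2) _)
    rw [h1, h2, add_zero]
  -- identify RHS
  have hR : (∫ r in a..b, (∫ s in r..b, φ s r)) = ∫ r, (∫ s, ψ s r ∂μ) ∂μ := by
    rw [intervalIntegral.integral_of_le hab]
    refine setIntegral_congr_fun measurableSet_Ioc (fun r hr => ?_)
    have hrb : r ≤ b := hr.2
    have har : a ≤ r := hr.1.le
    have hii : ∀ u v : ℝ, IntervalIntegrable (fun s => ψ s r) volume u v := by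
      intro u v
      have : (fun s => ψ s r) = (Ici r).indicator (fun s => φ s r) := by
        funext s
        by_cases h : r ≤ s
        · simp [hψ, hM, Set.indicator_of_mem, h, uncurry]
        · simp [hψ, hM, Set.indicator_of_notMem, h, uncurry]
      rw [this, intervalIntegrable_iff]
      exact ((hψcont' r).integrableOn_uIoc).indicator measurableSet_Ici
    have hsplit : (∫ s, ψ s r ∂μ) = (∫ s in a..r, ψ s r) + ∫ s in r..b, ψ s r := by
      rw [integral_add_adjacent_intervals (hii a r) (hii r b),
        intervalIntegral.integral_of_le hab]
    rw [hsplit]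
    have h1 : (∫ s in a..r, ψ s r) = 0 := by
      rw [intervalIntegral.integral_of_le har, integral_Ioc_eq_integral_Ioo]
      rw [setIntegral_congr_fun measurableSet_Ioo
        (fun s hs => indicator_of_notMem (by simp [hM]; exact hs.2) _)]
      simp
    have h2 : (∫ s in r..b, ψ s r) = ∫ s in r..b, φ s r :=
      intervalIntegral.integral_congr (fun s hs => by
        rw [uIcc_of_le hrb] at hs
        exact indicator_of_mem (by simp [hM]; exact hs.1) _)
    rw [h1, h2, zero_add]
  rw [hL, hR]
  exact swap

/-- Triangle Fubini, arbitrary orientation. -/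
lemma fubini_gen (c t : ℝ) {φ : ℝ → ℝ → ℝ} (hφ : Continuous (uncurry φ)) :
    (∫ s in c..t, (∫ r in c..s, φ r s)) = ∫ r in c..t, (∫ s in r..t, φ r s) := by
  rcases le_total c t with h | h
  · exact fubini_triangle h (φ := fun s r => φ r s) (hφ.comp continuous_swap)
  · have L : (∫ s in c..t, (∫ r in c..s, φ r s)) = ∫ s in t..c, (∫ r in s..c, φ r s) := by
      rw [intervalIntegral.integral_symm t c, ← intervalIntegral.integral_neg]
      exact intervalIntegral.integral_congr fun s _ => by
        rw [intervalIntegral.integral_symm s c, neg_neg]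
    have R : (∫ r in c..t, (∫ s in r..t, φ r s)) = ∫ r in t..c, (∫ s in t..r, φ r s) := by
      rw [intervalIntegral.integral_symm t c, ← intervalIntegral.integral_neg]
      exact intervalIntegral.integral_congr fun r _ => by
        rw [intervalIntegral.integral_symm t r, neg_neg]
    rw [L, R]
    exact (fubini_triangle h (φ := φ) hφ).symm

/-- Master lemma: derivative of `t ↦ ∫ r in c..t, g r t`. -/
lemma convM {g gy : ℝ → ℝ → ℝ} (hg : Continuous (uncurry g))
    (hgy : Continuous (uncurry gy))
    (hd : ∀ r x, HasDerivAt (fun t => g r t) (gy r x) x) (c x : ℝ) :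
    HasDerivAt (fun t => ∫ r in c..t, g r t)
      (g x x + ∫ r in c..x, gy r x) x := by
  have hgc : ∀ r, Continuous (g r) := fun r => hg.comp (Continuous.prodMk_right r)
  have hgc' : ∀ t, Continuous (fun r => g r t) := fun t =>
    hg.comp (continuous_id.prodMk continuous_const)
  have hgyc' : ∀ t, Continuous (fun r => gy r t) := fun t =>
    hgy.comp (continuous_id.prodMk continuous_const)
  set G : ℝ → ℝ := fun s => g s s + ∫ r in c..s, gy r s with hG
  have hGc : Continuous G := by
    refine (hg.comp (continuous_id.prodMk continuous_id)).add ?_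
    exact intervalIntegral.continuous_parametric_intervalIntegral_of_continuous
      (f := fun s r => gy r s) (hgy.comp continuous_swap) continuous_id
  have key : ∀ t, (∫ r in c..t, g r t) = ∫ s in c..t, G s := by
    intro t
    have fub : (∫ s in c..t, (∫ r in c..s, gy r s)) = ∫ r in c..t, (∫ s in r..t, gy r s) :=
      fubini_gen c t hgy
    have inner : ∀ r, (∫ s in r..t, gy r s) = g r t - g r r := fun r =>
      integral_eq_sub_of_hasDerivAt (fun s _ => hd r s)
        ((hgy.comp (Continuous.prodMk_right r)).intervalIntegrable r t)
    have : (∫ s in c..t, G s)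
        = (∫ s in c..t, g s s) + ∫ s in c..t, (∫ r in c..s, gy r s) := by
      refine intervalIntegral.integral_add ?_ ?_
      · exact (hg.comp (continuous_id.prodMk continuous_id)).intervalIntegrable c t
      · refine Continuous.intervalIntegrable ?_ c t
        exact intervalIntegral.continuous_parametric_intervalIntegral_of_continuous
          (f := fun s r => gy r s) (hgy.comp continuous_swap) continuous_id
    rw [this, fub]
    have : (∫ r in c..t, (∫ s in r..t, gy r s)) = ∫ r in c..t, (g r t - g r r) :=
      intervalIntegral.integral_congr fun r _ => inner r
    have hgd : Continuous (fun r => g r r) := hg.comp (continuous_id.prodMk continuous_id)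
    have hsub : (∫ r in c..t, (g r t - g r r))
        = (∫ r in c..t, g r t) - ∫ r in c..t, g r r :=
      intervalIntegral.integral_sub ((hgc' t).intervalIntegrable c t)
        (hgd.intervalIntegrable c t)
    rw [this, hsub]
    ring
  have : HasDerivAt (fun t => ∫ s in c..t, G s) (G x) x := ftc_cont hGc c x
  rw [hG] at this
  exact (funext key : (fun t => ∫ r in c..t, g r t) = _) ▸ this

/-- Extension of a triangle-C¹ family to a globally C¹-in-the-second-variable family. -/
lemma extend_tri {F Fy : ℝ → ℝ → ℝ}
    (hFc : ContinuousOn (fun q : ℝ × ℝ => F q.1 q.2)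
      {q : ℝ × ℝ | 0 ≤ q.2 ∧ q.2 ≤ q.1 ∧ q.1 ≤ 1})
    (hFy : ∀ x y, 0 ≤ y → y ≤ x → x ≤ 1 →
      HasDerivWithinAt (fun y' => F x y') (Fy x y) (Icc 0 x) y)
    (hFyc : ContinuousOn (fun q : ℝ × ℝ => Fy q.1 q.2)
      {q : ℝ × ℝ | 0 ≤ q.2 ∧ q.2 ≤ q.1 ∧ q.1 ≤ 1}) :
    ∃ G Gy : ℝ → ℝ → ℝ, Continuous (uncurry G) ∧ Continuous (uncurry Gy) ∧
      (∀ r t, HasDerivAt (fun t' => G r t') (Gy r t) t) ∧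
      (∀ r t, 0 ≤ t → t ≤ r → r ≤ 1 → G r t = F r t ∧ Gy r t = Fy r t) := by
  set ρ : ℝ → ℝ := fun r => max 0 (min 1 r) with hρ
  have hρc : Continuous ρ := continuous_const.max (continuous_const.min continuous_id)
  set τ : ℝ → ℝ → ℝ := fun r t => max 0 (min (ρ r) t) with hτ
  have hτc : Continuous (fun p : ℝ × ℝ => τ p.1 p.2) :=
    continuous_const.max ((hρc.comp continuous_fst).min continuous_snd)
  have hmem : ∀ r t, ((ρ r, τ r t) : ℝ × ℝ) ∈
      {q : ℝ × ℝ | 0 ≤ q.2 ∧ q.2 ≤ q.1 ∧ q.1 ≤ 1} := by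
    intro r t
    have h0ρ : 0 ≤ ρ r := le_max_left _ _
    refine ⟨le_max_left _ _, max_le h0ρ (min_le_left _ _), ?_⟩
    exact max_le zero_le_one (min_le_left _ _)
  set Gy : ℝ → ℝ → ℝ := fun r t => Fy (ρ r) (τ r t) with hGy
  have hGyc : Continuous (uncurry Gy) := by
    refine hFyc.comp_continuous ?_ (fun p : ℝ × ℝ => hmem p.1 p.2)
    exact (hρc.comp continuous_fst).prodMk hτc
  set G : ℝ → ℝ → ℝ := fun r t => F (ρ r) 0 + ∫ σ in (0:ℝ)..t, Gy r σ with hG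
  have hGyc1 : ∀ r, Continuous (Gy r) := fun r => hGyc.comp (Continuous.prodMk_right r)
  have hGd : ∀ r t, HasDerivAt (fun t' => G r t') (Gy r t) t := fun r t =>
    (ftc_cont (hGyc1 r) 0 t).const_add _
  have hGc : Continuous (uncurry G) := by
    have h1 : Continuous (fun p : ℝ × ℝ => F (ρ p.1) 0) := by
      refine hFc.comp_continuous ((hρc.comp continuous_fst).prodMk continuous_const) ?_
      intro p
      exact ⟨le_refl 0, le_max_left _ _, max_le zero_le_one (min_le_left _ _)⟩
    have h2 : Continuous (fun p : ℝ × ℝ => ∫ σ in (0:ℝ)..p.2, Gy p.1 σ) := by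
      exact intervalIntegral.continuous_parametric_intervalIntegral_of_continuous
        (f := fun p : ℝ × ℝ => fun σ => Gy p.1 σ)
        (hGyc.comp ((continuous_fst.comp continuous_fst).prodMk continuous_snd))
        continuous_snd
    exact h1.add h2
  refine ⟨G, Gy, hGc, hGyc, hGd, ?_⟩
  intro r t h0t htr hr1
  have hρr : ρ r = r := by
    rw [hρ]; simp only []
    rw [min_eq_right hr1, max_eq_right (h0t.trans htr)]
  have hτeq : ∀ σ, 0 ≤ σ → σ ≤ r → τ r σ = σ := by
    intro σ h0σ hσr
    rw [hτ]; simp only []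
    rw [hρr, min_eq_right hσr, max_eq_right h0σ]
  have hGyeq : Gy r t = Fy r t := by rw [hGy]; simp only []; rw [hρr, hτeq t h0t htr]
  refine ⟨?_, hGyeq⟩
  have hcongr : (∫ σ in (0:ℝ)..t, Gy r σ) = ∫ σ in (0:ℝ)..t, Fy r σ := by
    refine intervalIntegral.integral_congr (fun σ hσ => ?_)
    rw [uIcc_of_le h0t] at hσ
    rw [hGy]; simp only []
    rw [hρr, hτeq σ hσ.1 (hσ.2.trans htr)]
  have hFcont : ContinuousOn (fun σ => F r σ) (Icc 0 t) :=
    hFc.comp (Continuous.prodMk_right r).continuousOn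
      (fun σ hσ => ⟨hσ.1, hσ.2.trans htr, hr1⟩)
  have hFder : ∀ σ ∈ Ioo 0 t, HasDerivWithinAt (fun σ' => F r σ') (Fy r σ) (Ioi σ) σ := by
    intro σ hσ
    have h := hFy r σ hσ.1.le (hσ.2.le.trans htr) hr1
    exact (h.hasDerivAt (Icc_mem_nhds hσ.1 (lt_of_lt_of_le hσ.2 htr))).hasDerivWithinAt
  have hFyint : IntervalIntegrable (fun σ => Fy r σ) volume 0 t := by
    apply ContinuousOn.intervalIntegrable
    rw [uIcc_of_le h0t]
    exact hFyc.comp (Continuous.prodMk_right r).continuousOn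
      (fun σ hσ => ⟨hσ.1, hσ.2.trans htr, hr1⟩)
  have hftc := integral_eq_sub_of_hasDeriv_right_of_le h0t hFcont hFder hFyint
  rw [hG]; simp only []; rw [hcongr, hftc, hρr]; ring

/-- Appendix B of the paper.  The Volterra kernel
transformation with difference kernel `L(x,y) = ℓ(x-y)` converts a solution
pair `(F, H)` of the simplified kernel equations into a solution pair
`(Ψ, Φ)` of the control kernel equations, whose boundary condition at `y = 0`
acquires the additional term `-ℓ(x)`. -/


theorem kernel_transformation
    (q1 q2 : ℝ) (hq1 : 0 < q1) (hq2 : 0 < q2) (d1 d2 p : ℝ)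
    (F H Fx Fy Hx Hy : ℝ → ℝ → ℝ)
    -- F, H continuously differentiable on the triangle 𝒟:
    (hFc : ContinuousOn (fun q : ℝ × ℝ => F q.1 q.2)
      {q : ℝ × ℝ | 0 ≤ q.2 ∧ q.2 ≤ q.1 ∧ q.1 ≤ 1})
    (hHc : ContinuousOn (fun q : ℝ × ℝ => H q.1 q.2)
      {q : ℝ × ℝ | 0 ≤ q.2 ∧ q.2 ≤ q.1 ∧ q.1 ≤ 1})
    (hFx : ∀ x y, 0 ≤ y → y ≤ x → x ≤ 1 →
      HasDerivWithinAt (fun x' => F x' y) (Fx x y) (Icc y 1) x)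
    (hFy : ∀ x y, 0 ≤ y → y ≤ x → x ≤ 1 →
      HasDerivWithinAt (fun y' => F x y') (Fy x y) (Icc 0 x) y)
    (hHx : ∀ x y, 0 ≤ y → y ≤ x → x ≤ 1 →
      HasDerivWithinAt (fun x' => H x' y) (Hx x y) (Icc y 1) x)
    (hHy : ∀ x y, 0 ≤ y → y ≤ x → x ≤ 1 →
      HasDerivWithinAt (fun y' => H x y') (Hy x y) (Icc 0 x) y)
    (hFxc : ContinuousOn (fun q : ℝ × ℝ => Fx q.1 q.2)
      {q : ℝ × ℝ | 0 ≤ q.2 ∧ q.2 ≤ q.1 ∧ q.1 ≤ 1})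
    (hFyc : ContinuousOn (fun q : ℝ × ℝ => Fy q.1 q.2)
      {q : ℝ × ℝ | 0 ≤ q.2 ∧ q.2 ≤ q.1 ∧ q.1 ≤ 1})
    (hHxc : ContinuousOn (fun q : ℝ × ℝ => Hx q.1 q.2)
      {q : ℝ × ℝ | 0 ≤ q.2 ∧ q.2 ≤ q.1 ∧ q.1 ≤ 1})
    (hHyc : ContinuousOn (fun q : ℝ × ℝ => Hy q.1 q.2)
      {q : ℝ × ℝ | 0 ≤ q.2 ∧ q.2 ≤ q.1 ∧ q.1 ≤ 1})
    -- the simplified kernel equations (B.4)–(B.6) on 𝒟: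
    (hFpde : ∀ x y, 0 ≤ y → y ≤ x → x ≤ 1 →
      q2 * Fx x y - q1 * Fy x y = d2 * H x y)
    (hHpde : ∀ x y, 0 ≤ y → y ≤ x → x ≤ 1 →
      q2 * Hx x y + q2 * Hy x y = d1 * F x y)
    (hFbc : ∀ x ∈ Icc (0:ℝ) 1, F x x = -d2 / (q1 + q2))
    (hHbc : ∀ x ∈ Icc (0:ℝ) 1, H x 0 = (q1 * p / q2) * F x 0)
    -- ℓ continuously differentiable on [0,1], L(x,y) = ℓ(x-y):
    (ℓ ℓ' : ℝ → ℝ)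
    (hℓ : ∀ s ∈ Icc (0:ℝ) 1, HasDerivWithinAt ℓ (ℓ' s) (Icc 0 1) s)
    (hℓ'c : ContinuousOn ℓ' (Icc 0 1))
    -- the transformed kernels:
    (Ψ Φ : ℝ → ℝ → ℝ)
    (hΨ : ∀ x y, Ψ x y = F x y + ∫ r in y..x, ℓ (x - r) * F r y)
    (hΦ : ∀ x y, Φ x y = H x y - ℓ (x - y) + ∫ r in y..x, ℓ (x - r) * H r y) :
    (∀ x y, 0 ≤ y → y ≤ x → x ≤ 1 →
      ∃ Ψx Ψy Φx Φy : ℝ,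
        HasDerivWithinAt (fun x' => Ψ x' y) Ψx (Icc y 1) x ∧
        HasDerivWithinAt (fun y' => Ψ x y') Ψy (Icc 0 x) y ∧
        HasDerivWithinAt (fun x' => Φ x' y) Φx (Icc y 1) x ∧
        HasDerivWithinAt (fun y' => Φ x y') Φy (Icc 0 x) y ∧
        q2 * Ψx - q1 * Ψy = d2 * Φ x y ∧
        q2 * Φx + q2 * Φy = d1 * Ψ x y) ∧
    (∀ x ∈ Icc (0:ℝ) 1, Ψ x x = -d2 / (q1 + q2)) ∧
    (∀ x ∈ Icc (0:ℝ) 1, Φ x 0 = (q1 * p / q2) * Ψ x 0 - ℓ x) := by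
  have hq12 : q1 + q2 ≠ 0 := by positivity
  -- global C¹ extension of ℓ
  set k' : ℝ → ℝ := fun s => ℓ' (max 0 (min 1 s)) with hk'def
  have hπmem : ∀ s : ℝ, max 0 (min 1 s) ∈ Icc (0:ℝ) 1 := fun s =>
    ⟨le_max_left _ _, max_le zero_le_one (min_le_left _ _)⟩
  have hk'c : Continuous k' :=
    hℓ'c.comp_continuous (continuous_const.max (continuous_const.min continuous_id)) hπmem
  set el : ℝ → ℝ := fun s => ℓ 0 + ∫ σ in (0:ℝ)..s, k' σ with heldef
  have held : ∀ s, HasDerivAt el (k' s) s := fun s => (ftc_cont hk'c 0 s).const_add _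
  have helc : Continuous el :=
    continuous_const.add (intervalIntegral.continuous_primitive
      (fun a b => hk'c.intervalIntegrable a b) 0)
  have heleq : ∀ s ∈ Icc (0:ℝ) 1, el s = ℓ s := by
    intro s hs
    have h1 : (∫ σ in (0:ℝ)..s, k' σ) = ∫ σ in (0:ℝ)..s, ℓ' σ := by
      refine intervalIntegral.integral_congr (fun σ hσ => ?_)
      rw [uIcc_of_le hs.1] at hσ
      rw [hk'def]
      simp only []
      rw [min_eq_right (hσ.2.trans hs.2), max_eq_right hσ.1]
    have hcont : ContinuousOn ℓ (Icc 0 s) := fun σ hσ =>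
      ((hℓ σ ⟨hσ.1, hσ.2.trans hs.2⟩).continuousWithinAt).mono (Icc_subset_Icc le_rfl hs.2)
    have hder : ∀ σ ∈ Ioo (0:ℝ) s, HasDerivWithinAt ℓ (ℓ' σ) (Ioi σ) σ := fun σ hσ =>
      ((hℓ σ ⟨hσ.1.le, hσ.2.le.trans hs.2⟩).hasDerivAt
        (Icc_mem_nhds hσ.1 (lt_of_lt_of_le hσ.2 hs.2))).hasDerivWithinAt
    have hint : IntervalIntegrable ℓ' volume 0 s := by
      apply ContinuousOn.intervalIntegrable
      rw [uIcc_of_le hs.1]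
      exact hℓ'c.mono (Icc_subset_Icc le_rfl hs.2)
    have h2 := intervalIntegral.integral_eq_sub_of_hasDeriv_right_of_le hs.1 hcont hder hint
    rw [heldef]
    simp only []
    rw [h1, h2]
    ring
  -- extensions of F and H
  obtain ⟨Ft, Fyt, hFtc, hFytc, hFtd, hFteq⟩ := extend_tri hFc hFy hFyc
  obtain ⟨Ht, Hyt, hHtc, hHytc, hHtd, hHteq⟩ := extend_tri hHc hHy hHyc
  refine ⟨?_, ?_, ?_⟩
  · -- main PDE part
    intro x y h0y hyx hx1
    have h0x : (0:ℝ) ≤ x := h0y.trans hyx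
    have hy1 : y ≤ 1 := hyx.trans hx1
    -- slice continuity
    have hFsl : ContinuousOn (fun r => F r y) (Icc y x) :=
      hFc.comp (continuous_id.prodMk continuous_const).continuousOn
        (fun r hr => ⟨h0y, hr.1, hr.2.trans hx1⟩)
    have hFxsl : ContinuousOn (fun r => Fx r y) (Icc y x) :=
      hFxc.comp (continuous_id.prodMk continuous_const).continuousOn
        (fun r hr => ⟨h0y, hr.1, hr.2.trans hx1⟩)
    have hFysl : ContinuousOn (fun r => Fy r y) (Icc y x) :=
      hFyc.comp (continuous_id.prodMk continuous_const).continuousOn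
        (fun r hr => ⟨h0y, hr.1, hr.2.trans hx1⟩)
    have hHsl : ContinuousOn (fun r => H r y) (Icc y x) :=
      hHc.comp (continuous_id.prodMk continuous_const).continuousOn
        (fun r hr => ⟨h0y, hr.1, hr.2.trans hx1⟩)
    have hHxsl : ContinuousOn (fun r => Hx r y) (Icc y x) :=
      hHxc.comp (continuous_id.prodMk continuous_const).continuousOn
        (fun r hr => ⟨h0y, hr.1, hr.2.trans hx1⟩)
    have hHysl : ContinuousOn (fun r => Hy r y) (Icc y x) :=
      hHyc.comp (continuous_id.prodMk continuous_const).continuousOn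
        (fun r hr => ⟨h0y, hr.1, hr.2.trans hx1⟩)
    have helxc : Continuous (fun r : ℝ => el (x - r)) :=
      helc.comp (continuous_const.sub continuous_id)
    have hk'xc : Continuous (fun r : ℝ => k' (x - r)) :=
      hk'c.comp (continuous_const.sub continuous_id)
    have intCC : ∀ {f : ℝ → ℝ}, ContinuousOn f (Icc y x) → IntervalIntegrable f volume y x := by
      intro f hf
      apply ContinuousOn.intervalIntegrable
      rw [uIcc_of_le hyx]
      exact hf
    -- convolution derivatives, x-direction
    have hg1c : Continuous (Function.uncurry fun r t : ℝ => el (t - r) * Ft r y) :=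
      (helc.comp (continuous_snd.sub continuous_fst)).mul
        (hFtc.comp (continuous_fst.prodMk continuous_const))
    have hgy1c : Continuous (Function.uncurry fun r t : ℝ => k' (t - r) * Ft r y) :=
      (hk'c.comp (continuous_snd.sub continuous_fst)).mul
        (hFtc.comp (continuous_fst.prodMk continuous_const))
    have hg3c : Continuous (Function.uncurry fun r t : ℝ => el (t - r) * Ht r y) :=
      (helc.comp (continuous_snd.sub continuous_fst)).mul
        (hHtc.comp (continuous_fst.prodMk continuous_const))
    have hgy3c : Continuous (Function.uncurry fun r t : ℝ => k' (t - r) * Ht r y) :=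
      (hk'c.comp (continuous_snd.sub continuous_fst)).mul
        (hHtc.comp (continuous_fst.prodMk continuous_const))
    have hd1 : ∀ r t', HasDerivAt (fun t => el (t - r) * Ft r y) (k' (t' - r) * Ft r y) t' :=
      fun r t' => by
        simpa using (HasDerivAt.comp t' (held (t' - r))
          ((hasDerivAt_id t').sub_const r)).mul_const (Ft r y)
    have hd3 : ∀ r t', HasDerivAt (fun t => el (t - r) * Ht r y) (k' (t' - r) * Ht r y) t' :=
      fun r t' => by
        simpa using (HasDerivAt.comp t' (held (t' - r))
          ((hasDerivAt_id t').sub_const r)).mul_const (Ht r y)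
    have A1 := convM hg1c hgy1c hd1 y x
    have A3 := convM hg3c hgy3c hd3 y x
    -- convolution derivatives, y-direction
    have hg2c : Continuous (Function.uncurry fun r t : ℝ => el (x - r) * Ft r t) :=
      (helc.comp (continuous_const.sub continuous_fst)).mul hFtc
    have hgy2c : Continuous (Function.uncurry fun r t : ℝ => el (x - r) * Fyt r t) :=
      (helc.comp (continuous_const.sub continuous_fst)).mul hFytc
    have hg4c : Continuous (Function.uncurry fun r t : ℝ => el (x - r) * Ht r t) :=
      (helc.comp (continuous_const.sub continuous_fst)).mul hHtc
    have hgy4c : Continuous (Function.uncurry fun r t : ℝ => el (x - r) * Hyt r t) :=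
      (helc.comp (continuous_const.sub continuous_fst)).mul hHytc
    have hd2 : ∀ r t', HasDerivAt (fun t => el (x - r) * Ft r t) (el (x - r) * Fyt r t') t' :=
      fun r t' => (hFtd r t').const_mul (el (x - r))
    have hd4 : ∀ r t', HasDerivAt (fun t => el (x - r) * Ht r t) (el (x - r) * Hyt r t') t' :=
      fun r t' => (hHtd r t').const_mul (el (x - r))
    have A2 := convM hg2c hgy2c hd2 x y
    have A4 := convM hg4c hgy4c hd4 x y
    -- boundary-derivative terms for ℓ(x-y)
    have hel_x : HasDerivAt (fun t => el (t - y)) (k' (x - y)) x := by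
      simpa [Function.comp_def] using HasDerivAt.comp x (held (x - y)) ((hasDerivAt_id x).sub_const y)
    have hel_y : HasDerivAt (fun t => el (x - t)) (-k' (x - y)) y := by
      simpa [Function.comp_def] using HasDerivAt.comp y (held (x - y)) ((hasDerivAt_id y).const_sub x)
    -- integral identities
    have E1 : (∫ r in y..x, k' (x - r) * Ft r y) = ∫ r in y..x, k' (x - r) * F r y := by
      refine intervalIntegral.integral_congr (fun r hr => ?_)
      rw [uIcc_of_le hyx] at hr
      rw [(hFteq r y h0y hr.1 (hr.2.trans hx1)).1]
    have E2 : (∫ r in x..y, el (x - r) * Fyt r y) = -∫ r in y..x, el (x - r) * Fy r y := by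
      rw [intervalIntegral.integral_symm y x]
      congr 1
      refine intervalIntegral.integral_congr (fun r hr => ?_)
      rw [uIcc_of_le hyx] at hr
      rw [(hFteq r y h0y hr.1 (hr.2.trans hx1)).2]
    have E1H : (∫ r in y..x, k' (x - r) * Ht r y) = ∫ r in y..x, k' (x - r) * H r y := by
      refine intervalIntegral.integral_congr (fun r hr => ?_)
      rw [uIcc_of_le hyx] at hr
      rw [(hHteq r y h0y hr.1 (hr.2.trans hx1)).1]
    have E2H : (∫ r in x..y, el (x - r) * Hyt r y) = -∫ r in y..x, el (x - r) * Hy r y := by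
      rw [intervalIntegral.integral_symm y x]
      congr 1
      refine intervalIntegral.integral_congr (fun r hr => ?_)
      rw [uIcc_of_le hyx] at hr
      rw [(hHteq r y h0y hr.1 (hr.2.trans hx1)).2]
    have I_F : (∫ r in y..x, (k' (x - r) * F r y - el (x - r) * Fx r y))
        = -(el (x - x) * F x y) - -(el (x - y) * F y y) := by
      refine intervalIntegral.integral_eq_sub_of_hasDeriv_right_of_le hyx
        ((helxc.continuousOn.mul hFsl).neg) ?_
        (intCC ((hk'xc.continuousOn.mul hFsl).sub (helxc.continuousOn.mul hFxsl)))
      intro r hr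
      have hFr : HasDerivAt (fun r' => F r' y) (Fx r y) r :=
        (hFx r y h0y hr.1.le (hr.2.le.trans hx1)).hasDerivAt
          (Icc_mem_nhds hr.1 (lt_of_lt_of_le hr.2 hx1))
      have helr0 := HasDerivAt.comp (h₂ := el) (h := fun t => x - t) r (held (x - r))
        ((hasDerivAt_id r).const_sub x)
      have helr : HasDerivAt (fun r' => el (x - r')) (k' (x - r) * -1) r := helr0
      have h := (helr.mul hFr).neg
      have h2 : HasDerivAt (fun r' => -(el (x - r') * F r' y))
          (k' (x - r) * F r y - el (x - r) * Fx r y) r := by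
        exact h.congr_deriv (by ring)
      exact h2.hasDerivWithinAt
    have I_H : (∫ r in y..x, (k' (x - r) * H r y - el (x - r) * Hx r y))
        = -(el (x - x) * H x y) - -(el (x - y) * H y y) := by
      refine intervalIntegral.integral_eq_sub_of_hasDeriv_right_of_le hyx
        ((helxc.continuousOn.mul hHsl).neg) ?_
        (intCC ((hk'xc.continuousOn.mul hHsl).sub (helxc.continuousOn.mul hHxsl)))
      intro r hr
      have hHr : HasDerivAt (fun r' => H r' y) (Hx r y) r :=
        (hHx r y h0y hr.1.le (hr.2.le.trans hx1)).hasDerivAt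
          (Icc_mem_nhds hr.1 (lt_of_lt_of_le hr.2 hx1))
      have helr0 := HasDerivAt.comp (h₂ := el) (h := fun t => x - t) r (held (x - r))
        ((hasDerivAt_id r).const_sub x)
      have helr : HasDerivAt (fun r' => el (x - r')) (k' (x - r) * -1) r := helr0
      have h := (helr.mul hHr).neg
      have h2 : HasDerivAt (fun r' => -(el (x - r') * H r' y))
          (k' (x - r) * H r y - el (x - r) * Hx r y) r := by
        exact h.congr_deriv (by ring)
      exact h2.hasDerivWithinAt
    have E3 : q2 * (∫ r in y..x, k' (x - r) * F r y)
        - q1 * (∫ r in y..x, el (x - r) * Fy r y)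
        = (-(el (x - x) * F x y) - -(el (x - y) * F y y)) * q2
          + d2 * ∫ r in y..x, el (x - r) * H r y := by
      have i1 : IntervalIntegrable (fun r => k' (x - r) * F r y) volume y x :=
        intCC (hk'xc.continuousOn.mul hFsl)
      have i2 : IntervalIntegrable (fun r => el (x - r) * Fy r y) volume y x :=
        intCC (helxc.continuousOn.mul hFysl)
      have i3 : IntervalIntegrable (fun r => k' (x - r) * F r y - el (x - r) * Fx r y)
        volume y x := intCC ((hk'xc.continuousOn.mul hFsl).sub (helxc.continuousOn.mul hFxsl))
      have i4 : IntervalIntegrable (fun r => el (x - r) * H r y) volume y x :=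
        intCC (helxc.continuousOn.mul hHsl)
      rw [← intervalIntegral.integral_const_mul, ← intervalIntegral.integral_const_mul,
        ← intervalIntegral.integral_sub (i1.const_mul q2) (i2.const_mul q1)]
      have step2 : (∫ r in y..x, (q2 * (k' (x - r) * F r y) - q1 * (el (x - r) * Fy r y)))
          = ∫ r in y..x, ((k' (x - r) * F r y - el (x - r) * Fx r y) * q2
            + d2 * (el (x - r) * H r y)) := by
        refine intervalIntegral.integral_congr (fun r hr => ?_)
        rw [uIcc_of_le hyx] at hr
        linear_combination el (x - r) * hFpde r y h0y hr.1 (hr.2.trans hx1)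
      rw [step2, intervalIntegral.integral_add (i3.mul_const q2) (i4.const_mul d2),
        intervalIntegral.integral_mul_const, intervalIntegral.integral_const_mul, I_F]
    have E3H : q2 * (∫ r in y..x, k' (x - r) * H r y)
        + q2 * (∫ r in y..x, el (x - r) * Hy r y)
        = (-(el (x - x) * H x y) - -(el (x - y) * H y y)) * q2
          + d1 * ∫ r in y..x, el (x - r) * F r y := by
      have i1 : IntervalIntegrable (fun r => k' (x - r) * H r y) volume y x :=
        intCC (hk'xc.continuousOn.mul hHsl)
      have i2 : IntervalIntegrable (fun r => el (x - r) * Hy r y) volume y x :=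
        intCC (helxc.continuousOn.mul hHysl)
      have i3 : IntervalIntegrable (fun r => k' (x - r) * H r y - el (x - r) * Hx r y)
        volume y x := intCC ((hk'xc.continuousOn.mul hHsl).sub (helxc.continuousOn.mul hHxsl))
      have i4 : IntervalIntegrable (fun r => el (x - r) * F r y) volume y x :=
        intCC (helxc.continuousOn.mul hFsl)
      rw [← intervalIntegral.integral_const_mul, ← intervalIntegral.integral_const_mul,
        ← intervalIntegral.integral_add (i1.const_mul q2) (i2.const_mul q2)]
      have step2 : (∫ r in y..x, (q2 * (k' (x - r) * H r y) + q2 * (el (x - r) * Hy r y)))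
          = ∫ r in y..x, ((k' (x - r) * H r y - el (x - r) * Hx r y) * q2
            + d1 * (el (x - r) * F r y)) := by
        refine intervalIntegral.integral_congr (fun r hr => ?_)
        rw [uIcc_of_le hyx] at hr
        linear_combination el (x - r) * hHpde r y h0y hr.1 (hr.2.trans hx1)
      rw [step2, intervalIntegral.integral_add (i3.mul_const q2) (i4.const_mul d1),
        intervalIntegral.integral_mul_const, intervalIntegral.integral_const_mul, I_H]
    have E7' : (q1 + q2) * F y y = -d2 := by
      rw [hFbc y ⟨h0y, hy1⟩]
      field_simp
    have EΨ : Ψ x y = F x y + ∫ r in y..x, el (x - r) * F r y := by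
      rw [hΨ x y]
      congr 1
      refine intervalIntegral.integral_congr (fun r hr => ?_)
      rw [uIcc_of_le hyx] at hr
      rw [heleq (x - r) ⟨by linarith [hr.2], by linarith [hr.1]⟩]
    have hΦval : Φ x y = H x y - el (x - y) + ∫ r in y..x, el (x - r) * H r y := by
      rw [hΦ x y, heleq (x - y) ⟨by linarith, by linarith⟩]
      congr 1
      refine intervalIntegral.integral_congr (fun r hr => ?_)
      rw [uIcc_of_le hyx] at hr
      rw [heleq (x - r) ⟨by linarith [hr.2], by linarith [hr.1]⟩]
    refine ⟨Fx x y + (el (x - x) * Ft x y + ∫ r in y..x, k' (x - r) * Ft r y),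
      Fy x y - (el (x - y) * Ft y y + ∫ r in x..y, el (x - r) * Fyt r y),
      Hx x y - k' (x - y) + (el (x - x) * Ht x y + ∫ r in y..x, k' (x - r) * Ht r y),
      Hy x y - -k' (x - y) - (el (x - y) * Ht y y + ∫ r in x..y, el (x - r) * Hyt r y),
      ?_, ?_, ?_, ?_, ?_, ?_⟩
    · -- ∂x Ψ
      have hmodel : HasDerivWithinAt
          (fun t => F t y + ∫ r in y..t, el (t - r) * Ft r y)
          (Fx x y + (el (x - x) * Ft x y + ∫ r in y..x, k' (x - r) * Ft r y)) (Icc y 1) x :=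
        (hFx x y h0y hyx hx1).add A1.hasDerivWithinAt
      refine hmodel.congr ?_ ?_
      · intro t ht
        rw [hΨ t y]
        congr 1
        refine intervalIntegral.integral_congr (fun r hr => ?_)
        rw [uIcc_of_le ht.1] at hr
        rw [heleq (t - r) ⟨by linarith [hr.2], by linarith [hr.1, ht.2]⟩,
          (hFteq r y h0y hr.1 (hr.2.trans ht.2)).1]
      · rw [hΨ x y]
        congr 1
        refine intervalIntegral.integral_congr (fun r hr => ?_)
        rw [uIcc_of_le hyx] at hr
        rw [heleq (x - r) ⟨by linarith [hr.2], by linarith [hr.1]⟩,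
          (hFteq r y h0y hr.1 (hr.2.trans hx1)).1]
    · -- ∂y Ψ
      have hmodel : HasDerivWithinAt
          (fun t => F x t - ∫ r in x..t, el (x - r) * Ft r t)
          (Fy x y - (el (x - y) * Ft y y + ∫ r in x..y, el (x - r) * Fyt r y)) (Icc 0 x) y :=
        (hFy x y h0y hyx hx1).sub A2.hasDerivWithinAt
      refine hmodel.congr ?_ ?_
      · intro t ht
        rw [hΨ x t, intervalIntegral.integral_symm t x]
        have hcg : (∫ r in t..x, el (x - r) * Ft r t) = ∫ r in t..x, ℓ (x - r) * F r t := by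
          refine intervalIntegral.integral_congr (fun r hr => ?_)
          rw [uIcc_of_le ht.2] at hr
          rw [heleq (x - r) ⟨by linarith [hr.2], by linarith [hr.1, ht.1]⟩,
            (hFteq r t ht.1 hr.1 (hr.2.trans hx1)).1]
        rw [hcg]
        ring
      · rw [hΨ x y, intervalIntegral.integral_symm y x]
        have hcg : (∫ r in y..x, el (x - r) * Ft r y) = ∫ r in y..x, ℓ (x - r) * F r y := by
          refine intervalIntegral.integral_congr (fun r hr => ?_)
          rw [uIcc_of_le hyx] at hr
          rw [heleq (x - r) ⟨by linarith [hr.2], by linarith [hr.1]⟩,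
            (hFteq r y h0y hr.1 (hr.2.trans hx1)).1]
        rw [hcg]
        ring
    · -- ∂x Φ
      have hmodel : HasDerivWithinAt
          (fun t => H t y - el (t - y) + ∫ r in y..t, el (t - r) * Ht r y)
          (Hx x y - k' (x - y) + (el (x - x) * Ht x y + ∫ r in y..x, k' (x - r) * Ht r y))
          (Icc y 1) x :=
        ((hHx x y h0y hyx hx1).sub hel_x.hasDerivWithinAt).add A3.hasDerivWithinAt
      refine hmodel.congr ?_ ?_
      · intro t ht
        rw [hΦ t y, heleq (t - y) ⟨by linarith [ht.1], by linarith [ht.2]⟩]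
        congr 1
        refine intervalIntegral.integral_congr (fun r hr => ?_)
        rw [uIcc_of_le ht.1] at hr
        rw [heleq (t - r) ⟨by linarith [hr.2], by linarith [hr.1, ht.2]⟩,
          (hHteq r y h0y hr.1 (hr.2.trans ht.2)).1]
      · rw [hΦ x y, heleq (x - y) ⟨by linarith, by linarith⟩]
        congr 1
        refine intervalIntegral.integral_congr (fun r hr => ?_)
        rw [uIcc_of_le hyx] at hr
        rw [heleq (x - r) ⟨by linarith [hr.2], by linarith [hr.1]⟩,
          (hHteq r y h0y hr.1 (hr.2.trans hx1)).1]
    · -- ∂y Φ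
      have hmodel : HasDerivWithinAt
          (fun t => H x t - el (x - t) - ∫ r in x..t, el (x - r) * Ht r t)
          (Hy x y - -k' (x - y) - (el (x - y) * Ht y y + ∫ r in x..y, el (x - r) * Hyt r y))
          (Icc 0 x) y :=
        ((hHy x y h0y hyx hx1).sub hel_y.hasDerivWithinAt).sub A4.hasDerivWithinAt
      refine hmodel.congr ?_ ?_
      · intro t ht
        rw [hΦ x t, intervalIntegral.integral_symm t x,
          heleq (x - t) ⟨by linarith [ht.2], by linarith [ht.1]⟩]
        have hcg : (∫ r in t..x, el (x - r) * Ht r t) = ∫ r in t..x, ℓ (x - r) * H r t := by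
          refine intervalIntegral.integral_congr (fun r hr => ?_)
          rw [uIcc_of_le ht.2] at hr
          rw [heleq (x - r) ⟨by linarith [hr.2], by linarith [hr.1, ht.1]⟩,
            (hHteq r t ht.1 hr.1 (hr.2.trans hx1)).1]
        rw [hcg]
        ring
      · rw [hΦ x y, intervalIntegral.integral_symm y x,
          heleq (x - y) ⟨by linarith, by linarith⟩]
        have hcg : (∫ r in y..x, el (x - r) * Ht r y) = ∫ r in y..x, ℓ (x - r) * H r y := by
          refine intervalIntegral.integral_congr (fun r hr => ?_)
          rw [uIcc_of_le hyx] at hr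
          rw [heleq (x - r) ⟨by linarith [hr.2], by linarith [hr.1]⟩,
            (hHteq r y h0y hr.1 (hr.2.trans hx1)).1]
        rw [hcg]
        ring
    · -- first PDE
      rw [hΦval, (hFteq x y h0y hyx hx1).1, (hFteq y y h0y le_rfl hy1).1, E1, E2]
      linear_combination E3 + hFpde x y h0y hyx hx1 + el (x - y) * E7'
    · -- second PDE
      rw [EΨ, (hHteq x y h0y hyx hx1).1, (hHteq y y h0y le_rfl hy1).1, E1H, E2H]
      linear_combination E3H + hHpde x y h0y hyx hx1
  · -- boundary at y = x
    intro x hx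
    rw [hΨ x x, intervalIntegral.integral_same, add_zero]
    exact hFbc x hx
  · -- boundary at y = 0
    intro x hx
    have hcg : (∫ r in (0:ℝ)..x, ℓ (x - r) * H r 0)
        = ∫ r in (0:ℝ)..x, (q1 * p / q2) * (ℓ (x - r) * F r 0) := by
      refine intervalIntegral.integral_congr (fun r hr => ?_)
      rw [uIcc_of_le hx.1] at hr
      rw [hHbc r ⟨hr.1, hr.2.trans hx.2⟩]
      ring
    rw [hΦ x 0, hΨ x 0, hcg, intervalIntegral.integral_const_mul, hHbc x hx, sub_zero]
    ring
end
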